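/- arXiv:1312.1213 — 6 statements merged into one kernel-verified Lean document; each statement's English description precedes it below -/
import Mathlib

section
/- For any positive integers r, d, q: any sequence of n ≥ (⌈q/r⌉ + 2)·(2rd+1)^d vectors in ℤ^d, each with all coordinates in {-r,...,r}, whose total sum has all coordinates in {-q,...,q}, contains a nonempty proper subsequence whose sum is the zero vector. -/
open Finset

theorem kernel_exists (d : ℕ) (m : ℕ) (hm : d + 1 < m) (f : Fin m → Fin d → ℚ) :
    ∃ c : Fin m → ℚ, c ≠ 0 ∧ (∀ j, ∑ i, c i * f i j = 0) ∧ ∑ i, c i = 0 := by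
  let L : (Fin m → ℚ) →ₗ[ℚ] (Fin d → ℚ) × ℚ :=
    { toFun := fun c => (fun j => ∑ i, c i * f i j, ∑ i, c i)
      map_add' := by
        intro a b
        ext j <;> simp [add_mul, Finset.sum_add_distrib]
      map_smul' := by
        intro r a
        ext j <;> simp [Finset.mul_sum, mul_assoc] }
  have hni : ¬ Function.Injective L := by
    intro hinj
    have := LinearMap.finrank_le_finrank_of_injective hinj
    simp [Module.finrank_pi, Module.finrank_prod] at this
    omega
  rw [Function.not_injective_iff] at hni
  obtain ⟨a, b, hab, hne⟩ := hni
  refine ⟨a - b, sub_ne_zero_of_ne hne, ?_, ?_⟩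
  · intro j
    have := congrFun (congrArg Prod.fst hab) j
    simp only [L, LinearMap.coe_mk, AddHom.coe_mk] at this
    simp [sub_mul, Finset.sum_sub_distrib, this]
  · have := congrArg Prod.snd hab
    simp only [L, LinearMap.coe_mk, AddHom.coe_mk] at this
    simp [Pi.sub_apply, Finset.sum_sub_distrib, this]

theorem kernel_finset (d N : ℕ) (v : Fin N → Fin d → ℤ) (F : Finset (Fin N))
    (hm : d + 1 < F.card) :
    ∃ C : Fin N → ℚ, (∀ i, i ∉ F → C i = 0) ∧ (∃ i ∈ F, C i ≠ 0) ∧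
      (∀ j, ∑ i ∈ F, C i * (v i j : ℚ) = 0) ∧ ∑ i ∈ F, C i = 0 := by
  classical
  set e := F.equivFin with he
  obtain ⟨c, hc0, hcv, hcs⟩ := kernel_exists d F.card hm (fun k j => (v (e.symm k) j : ℚ))
  set C : Fin N → ℚ := fun i => if h : i ∈ F then c (e ⟨i, h⟩) else 0 with hC
  have key : ∀ g : Fin N → ℚ, ∑ i ∈ F, C i * g i = ∑ k, c k * g (e.symm k) := by
    intro g
    rw [← Finset.sum_coe_sort F (fun i => C i * g i), ← Equiv.sum_comp e.symm
      (fun x : {x // x ∈ F} => C x * g x)]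
    refine Finset.sum_congr rfl fun k _ => ?_
    simp [hC, (e.symm k).2, Subtype.coe_eta]
  refine ⟨C, fun i hi => dif_neg hi, ?_, ?_, ?_⟩
  · obtain ⟨k, hk⟩ : ∃ k, c k ≠ 0 := by
      by_contra hall
      push_neg at hall
      exact hc0 (funext hall)
    refine ⟨e.symm k, (e.symm k).2, ?_⟩
    simp [hC, (e.symm k).2, Subtype.coe_eta, hk]
  · intro j
    rw [key]
    simpa using hcv j
  · have := key (fun _ => 1)
    simp only [mul_one] at this
    rw [this]
    exact hcs

theorem small_frac (N d : ℕ) (S : Finset (Fin N)) (μ : Fin N → ℚ)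
    (hF : (S.filter (fun i => μ i ≠ 0 ∧ μ i ≠ 1)).card ≤ d + 1)
    (h0 : ∀ i, 0 ≤ μ i)
    (hsum : ∑ i ∈ S, μ i = (S.card : ℚ) - 1 - d) :
    ∃ i ∈ S, μ i = 0 := by
  classical
  by_contra hno
  push_neg at hno
  set F := S.filter (fun i => μ i ≠ 0 ∧ μ i ≠ 1) with hFdef
  have hFS : F ⊆ S := Finset.filter_subset _ _
  have hones : ∀ i ∈ S \ F, μ i = 1 := by
    intro i hi
    rw [Finset.mem_sdiff, hFdef, Finset.mem_filter] at hi
    have h1 := hno i hi.1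
    by_contra h2
    exact hi.2 ⟨hi.1, h1, h2⟩
  have hsplit : ∑ i ∈ S, μ i = ∑ i ∈ S \ F, μ i + ∑ i ∈ F, μ i :=
    (Finset.sum_sdiff hFS).symm
  have hsum2 : ∑ i ∈ S \ F, μ i = ((S \ F).card : ℚ) := by
    rw [Finset.sum_congr rfl hones]; simp
  have hcards : (S \ F).card = S.card - F.card := Finset.card_sdiff_of_subset hFS
  have hFcard : F.card ≤ S.card := Finset.card_le_card hFS
  have hcq : ((S \ F).card : ℚ) = (S.card : ℚ) - (F.card : ℚ) := by
    rw [hcards]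
    exact Nat.cast_sub hFcard
  have hFpos : ∀ i ∈ F, 0 < μ i := by
    intro i hi
    rw [hFdef, Finset.mem_filter] at hi
    exact lt_of_le_of_ne (h0 i) (Ne.symm hi.2.1)
  have hFle : (F.card : ℚ) ≤ (d : ℚ) + 1 := by exact_mod_cast hF
  have hd0 : (0:ℚ) ≤ (d:ℚ) := Nat.cast_nonneg d
  rw [hsplit, hsum2, hcq] at hsum
  rcases F.eq_empty_or_nonempty with hFe | hFne
  · have h1 : ∑ i ∈ F, μ i = 0 := by rw [hFe]; simp
    have h2 : (F.card : ℚ) = 0 := by rw [hFe]; simp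
    linarith
  · have hpos : 0 < ∑ i ∈ F, μ i := Finset.sum_pos hFpos hFne
    linarith

theorem improve (N d : ℕ) (v : Fin N → Fin d → ℤ) (S : Finset (Fin N)) :
    ∀ (m : ℕ) (μ : Fin N → ℚ),
      (S.filter (fun i => μ i ≠ 0 ∧ μ i ≠ 1)).card ≤ m →
      (∀ i, 0 ≤ μ i) → (∀ i, μ i ≤ 1) → (∀ i, i ∉ S → μ i = 0) →
      (∑ i ∈ S, μ i = (S.card : ℚ) - 1 - d) →
      (∀ j, ∑ i ∈ S, μ i * (v i j : ℚ) = 0) →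
      ∃ μ' : Fin N → ℚ, (∀ i, 0 ≤ μ' i) ∧ (∀ i, μ' i ≤ 1) ∧ (∀ i, i ∉ S → μ' i = 0) ∧
        (∑ i ∈ S, μ' i = (S.card : ℚ) - 1 - d) ∧ (∀ j, ∑ i ∈ S, μ' i * (v i j : ℚ) = 0) ∧
        ∃ i ∈ S, μ' i = 0 := by
  classical
  intro m
  induction m with
  | zero =>
    intro μ hcard h0 h1 hsupp hsum hv
    exact ⟨μ, h0, h1, hsupp, hsum, hv,
      small_frac N d S μ (le_trans hcard (by omega)) h0 hsum⟩
  | succ m ih =>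
    intro μ hcard h0 h1 hsupp hsum hv
    by_cases hsm : (S.filter (fun i => μ i ≠ 0 ∧ μ i ≠ 1)).card ≤ d + 1
    · exact ⟨μ, h0, h1, hsupp, hsum, hv, small_frac N d S μ hsm h0 hsum⟩
    · set F := S.filter (fun i => μ i ≠ 0 ∧ μ i ≠ 1) with hFdef
      have hFS : F ⊆ S := Finset.filter_subset _ _
      have hfrac : ∀ i ∈ F, 0 < μ i ∧ μ i < 1 := by
        intro i hi
        rw [hFdef, Finset.mem_filter] at hi
        exact ⟨lt_of_le_of_ne (h0 i) (Ne.symm hi.2.1), lt_of_le_of_ne (h1 i) hi.2.2⟩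
      obtain ⟨C, hC0, ⟨iC, hiCF, hiC⟩, hCv, hCs⟩ :=
        kernel_finset d N v F (by omega)
      -- step sizes
      set τ : Fin N → ℚ := fun i => if 0 < C i then (1 - μ i) / C i else μ i / (-C i) with hτ
      set G := F.filter (fun i => C i ≠ 0) with hG
      have hGne : G.Nonempty := ⟨iC, by rw [hG, Finset.mem_filter]; exact ⟨hiCF, hiC⟩⟩
      set t := G.inf' hGne τ with ht
      have hτpos : ∀ i ∈ G, 0 < τ i := by
        intro i hi
        rw [hG, Finset.mem_filter] at hi
        obtain ⟨hμ0, hμ1⟩ := hfrac i hi.1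
        rcases lt_or_gt_of_ne hi.2 with hneg | hpos
        · rw [hτ]
          simp only [if_neg (not_lt.mpr (le_of_lt hneg))]
          exact div_pos hμ0 (by linarith)
        · rw [hτ]
          simp only [if_pos hpos]
          exact div_pos (by linarith) hpos
      obtain ⟨i0, hi0G, hi0⟩ := Finset.exists_mem_eq_inf' hGne τ
      have htpos : 0 < t := by
        rw [ht, hi0]
        exact hτpos i0 hi0G
      obtain ⟨hi0F, hi0C⟩ := Finset.mem_filter.mp hi0G
      set μ' : Fin N → ℚ := fun i => μ i + t * C i with hμ'
      have htle : ∀ i ∈ G, t ≤ τ i := fun i hi => Finset.inf'_le _ hi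
      -- key bounds for each i
      have hbounds : ∀ i, 0 ≤ μ' i ∧ μ' i ≤ 1 := by
        intro i
        by_cases hCi : C i = 0
        · rw [hμ']; simp only [hCi, mul_zero, add_zero]; exact ⟨h0 i, h1 i⟩
        · have hiF : i ∈ F := by
            by_contra hiF
            exact hCi (hC0 i hiF)
          have hiG : i ∈ G := by rw [hG, Finset.mem_filter]; exact ⟨hiF, hCi⟩
          have hti := htle i hiG
          obtain ⟨hμ0, hμ1⟩ := hfrac i hiF
          rcases lt_or_gt_of_ne hCi with hneg | hpos
          · have hτi : τ i = μ i / (-C i) := by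
              rw [hτ]; simp only [if_neg (not_lt.mpr (le_of_lt hneg))]
            rw [hτi] at hti
            have h1' : t * (-C i) ≤ μ i := by
              rw [div_eq_mul_inv] at hti
              calc t * (-C i) ≤ (μ i * (-C i)⁻¹) * (-C i) := by
                    apply mul_le_mul_of_nonneg_right hti (by linarith)
                _ = μ i := by field_simp
            have h2' : t * C i ≤ 0 := by nlinarith
            constructor
            · show (0:ℚ) ≤ μ i + t * C i
              linarith
            · show μ i + t * C i ≤ 1
              linarith
          · have hτi : τ i = (1 - μ i) / C i := by rw [hτ]; simp only [if_pos hpos]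
            rw [hτi] at hti
            have h1' : t * C i ≤ 1 - μ i := by
              rw [div_eq_mul_inv] at hti
              calc t * C i ≤ ((1 - μ i) * (C i)⁻¹) * C i := by
                    apply mul_le_mul_of_nonneg_right hti (by linarith)
                _ = 1 - μ i := by field_simp
            have h2' : 0 ≤ t * C i := by nlinarith
            constructor
            · show (0:ℚ) ≤ μ i + t * C i
              linarith
            · show μ i + t * C i ≤ 1
              linarith
      -- i0 becomes integral
      have hti0 : t = τ i0 := hi0
      have hint : μ' i0 = 0 ∨ μ' i0 = 1 := by
        rcases lt_or_gt_of_ne hi0C with hneg | hpos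
        · left
          have hτi : τ i0 = μ i0 / (-C i0) := by
            rw [hτ]; simp only [if_neg (not_lt.mpr (le_of_lt hneg))]
          show μ i0 + t * C i0 = 0
          rw [hti0, hτi, div_neg, neg_mul, div_mul_cancel₀ (μ i0) hi0C]
          ring
        · right
          have hτi : τ i0 = (1 - μ i0) / C i0 := by
            rw [hτ]; simp only [if_pos hpos]
          show μ i0 + t * C i0 = 1
          rw [hti0, hτi, div_mul_cancel₀ (1 - μ i0) hi0C]
          ring
      -- sums preserved
      have hCS : ∑ i ∈ S, C i = 0 := by
        rw [← Finset.sum_subset hFS (fun i hi hni => hC0 i (by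
          intro hiF
          exact hni hiF))]
        exact hCs
      have hCvS : ∀ j, ∑ i ∈ S, C i * (v i j : ℚ) = 0 := by
        intro j
        rw [← Finset.sum_subset hFS (fun i hi hni => by rw [hC0 i hni, zero_mul])]
        exact hCv j
      have hsum' : ∑ i ∈ S, μ' i = (S.card : ℚ) - 1 - d := by
        rw [hμ']
        simp only [Finset.sum_add_distrib, ← Finset.mul_sum, hCS, mul_zero, add_zero]
        exact hsum
      have hv' : ∀ j, ∑ i ∈ S, μ' i * (v i j : ℚ) = 0 := by
        intro j
        rw [hμ']
        have : ∀ i, (μ i + t * C i) * (v i j : ℚ) = μ i * v i j + t * (C i * v i j) := by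
          intro i; ring
        simp only [this, Finset.sum_add_distrib, ← Finset.mul_sum, hCvS j, mul_zero, add_zero]
        exact hv j
      have hsupp' : ∀ i, i ∉ S → μ' i = 0 := by
        intro i hi
        show μ i + t * C i = 0
        rw [hsupp i hi, hC0 i (fun hiF => hi (hFS hiF)), mul_zero, add_zero]
      -- fractional set shrinks
      have hshrink : (S.filter (fun i => μ' i ≠ 0 ∧ μ' i ≠ 1)) ⊆ F.erase i0 := by
        intro i hi
        rw [Finset.mem_filter] at hi
        rw [Finset.mem_erase]
        constructor
        · rintro rfl
          rcases hint with h | h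
          · exact hi.2.1 h
          · exact hi.2.2 h
        · by_cases hCi : C i = 0
          · have heq : μ' i = μ i := by
              show μ i + t * C i = μ i
              rw [hCi, mul_zero, add_zero]
            rw [hFdef, Finset.mem_filter]
            exact ⟨hi.1, heq ▸ hi.2.1, heq ▸ hi.2.2⟩
          · by_contra hiF
            exact hCi (hC0 i hiF)
      have hcard' : (S.filter (fun i => μ' i ≠ 0 ∧ μ' i ≠ 1)).card ≤ m := by
        have hle1 := Finset.card_le_card hshrink
        have hle2 : (F.erase i0).card = F.card - 1 := Finset.card_erase_of_mem hi0F
        omega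
      exact ih μ' hcard' (fun i => (hbounds i).1) (fun i => (hbounds i).2) hsupp' hsum' hv'

def GoodL (N d : ℕ) (v : Fin N → Fin d → ℤ) (S : Finset (Fin N)) : Prop :=
  ∃ lam : Fin N → ℚ, (∀ i, 0 ≤ lam i) ∧ (∀ i, lam i ≤ 1) ∧ (∀ i, i ∉ S → lam i = 0) ∧
    (∑ i ∈ S, lam i = (S.card : ℚ) - d) ∧ (∀ j, ∑ i ∈ S, lam i * (v i j : ℚ) = 0)

theorem step_good (N d : ℕ) (v : Fin N → Fin d → ℤ) (S : Finset (Fin N))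
    (hd : d < S.card) (hg : GoodL N d v S) :
    ∃ i0 ∈ S, GoodL N d v (S.erase i0) := by
  classical
  obtain ⟨lam, hl0, hl1, hlsupp, hlsum, hlv⟩ := hg
  have hdk : (d : ℚ) < (S.card : ℚ) := by exact_mod_cast hd
  have hdk1 : (d : ℚ) + 1 ≤ (S.card : ℚ) := by exact_mod_cast hd
  have hkd : (0:ℚ) < (S.card : ℚ) - d := by linarith
  set α : ℚ := ((S.card:ℚ) - 1 - d) / ((S.card:ℚ) - d) with hα
  have hα0 : 0 ≤ α := div_nonneg (by linarith) hkd.le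
  have hα1 : α ≤ 1 := (div_le_one hkd).mpr (by linarith)
  set μ : Fin N → ℚ := fun i => α * lam i with hμ
  have h0 : ∀ i, 0 ≤ μ i := fun i => mul_nonneg hα0 (hl0 i)
  have h1 : ∀ i, μ i ≤ 1 := fun i =>
    le_trans (mul_le_mul hα1 (hl1 i) (hl0 i) zero_le_one) (by norm_num)
  have hsupp : ∀ i, i ∉ S → μ i = 0 := fun i hi => by
    show α * lam i = 0
    rw [hlsupp i hi, mul_zero]
  have hsum : ∑ i ∈ S, μ i = (S.card : ℚ) - 1 - d := by
    show ∑ i ∈ S, α * lam i = _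
    rw [← Finset.mul_sum, hlsum, hα]
    field_simp
  have hvs : ∀ j, ∑ i ∈ S, μ i * (v i j : ℚ) = 0 := by
    intro j
    show ∑ i ∈ S, α * lam i * (v i j : ℚ) = 0
    simp only [mul_assoc, ← Finset.mul_sum, hlv j, mul_zero]
  obtain ⟨μ', h0', h1', hsupp', hsum', hv', i0, hi0S, hi00⟩ :=
    improve N d v S _ μ le_rfl h0 h1 hsupp hsum hvs
  refine ⟨i0, hi0S, μ', h0', h1', ?_, ?_, ?_⟩
  · intro i hi
    rcases Finset.mem_erase.not.mp hi with hi'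
    by_cases hii : i = i0
    · rw [hii]; exact hi00
    · apply hsupp' i
      intro hiS
      exact hi (Finset.mem_erase.mpr ⟨hii, hiS⟩)
  · rw [Finset.sum_erase_eq_sub hi0S, hi00, sub_zero, hsum',
      Finset.card_erase_of_mem hi0S]
    have h1k : 1 ≤ S.card := by omega
    rw [Nat.cast_sub h1k]
    push_cast
    ring
  · intro j
    rw [Finset.sum_erase_eq_sub hi0S, hi00, zero_mul, sub_zero]
    exact hv' j

theorem good_bound (N d r : ℕ) (v : Fin N → Fin d → ℤ) (hv : ∀ i j, |v i j| ≤ (r:ℤ))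
    (S : Finset (Fin N)) (hg : GoodL N d v S) (j : Fin d) :
    |∑ i ∈ S, v i j| ≤ (d * r : ℤ) := by
  obtain ⟨lam, hl0, hl1, _, hlsum, hlv⟩ := hg
  have key : ((∑ i ∈ S, v i j : ℤ) : ℚ) = ∑ i ∈ S, (1 - lam i) * (v i j : ℚ) := by
    push_cast
    have : ∀ i ∈ S, (1 - lam i) * (v i j : ℚ) = (v i j : ℚ) - lam i * (v i j : ℚ) := by
      intro i _; ring
    rw [Finset.sum_congr rfl this, Finset.sum_sub_distrib, hlv j, sub_zero]
  have habs : |∑ i ∈ S, (1 - lam i) * (v i j : ℚ)| ≤ ∑ i ∈ S, (1 - lam i) * (r : ℚ) := by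
    refine le_trans (Finset.abs_sum_le_sum_abs _ _) (Finset.sum_le_sum ?_)
    intro i hi
    rw [abs_mul, abs_of_nonneg (by linarith [hl1 i])]
    apply mul_le_mul_of_nonneg_left _ (by linarith [hl1 i])
    have := hv i j
    rw [← Int.cast_abs]
    exact_mod_cast this
  have hsum2 : ∑ i ∈ S, (1 - lam i) * (r : ℚ) = ((d : ℚ)) * r := by
    rw [← Finset.sum_mul, Finset.sum_sub_distrib, hlsum, Finset.sum_const, nsmul_eq_mul,
      mul_one]
    ring
  rw [hsum2] at habs
  rw [← key] at habs
  rw [← Int.cast_abs] at habs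
  exact_mod_cast habs

theorem small_bound (N d r : ℕ) (v : Fin N → Fin d → ℤ) (hv : ∀ i j, |v i j| ≤ (r:ℤ))
    (S : Finset (Fin N)) (hS : S.card ≤ d) (j : Fin d) :
    |∑ i ∈ S, v i j| ≤ (d * r : ℤ) := by
  calc |∑ i ∈ S, v i j| ≤ ∑ i ∈ S, |v i j| := Finset.abs_sum_le_sum_abs _ _
    _ ≤ ∑ i ∈ S, (r : ℤ) := Finset.sum_le_sum (fun i _ => hv i j)
    _ = (S.card : ℤ) * r := by rw [Finset.sum_const, nsmul_eq_mul]
    _ ≤ (d : ℤ) * r := by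
        apply mul_le_mul_of_nonneg_right _ (by positivity)
        exact_mod_cast hS
    _ = (d * r : ℤ) := by push_cast; ring

theorem chain_exists (N d r : ℕ) (hd : 0 < d) (v : Fin N → Fin d → ℤ)
    (hv : ∀ i j, |v i j| ≤ (r:ℤ)) (hz : ∀ j, ∑ i, v i j = 0) :
    ∃ A : ℕ → Finset (Fin N), (∀ k, A k ⊆ A (k+1)) ∧ (∀ k, k ≤ N → (A k).card = k) ∧
      (∀ k j, |∑ i ∈ A k, v i j| ≤ (d * r : ℤ)) := by
  classical
  have main : ∀ m : ℕ, ∃ A : ℕ → Finset (Fin N),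
      (∀ k, A k ⊆ A (k+1)) ∧
      (∀ k, N - m ≤ k → k ≤ N → (A k).card = k) ∧
      (∀ k, N ≤ k → A k = Finset.univ) ∧
      (∀ k j, N - m ≤ k → |∑ i ∈ A k, v i j| ≤ (d * r : ℤ)) ∧
      (d ≤ N - m → GoodL N d v (A (N - m))) ∧
      (∀ k, k ≤ N - m → A k = A (N - m)) := by
    intro m
    induction m with
    | zero =>
      refine ⟨fun _ => Finset.univ, fun _ => le_rfl, ?_, fun _ _ => rfl, ?_, ?_, fun _ _ => rfl⟩
      · intro k h1 h2
        have : k = N := by omega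
        simp [this]
      · intro k j _
        have : ∑ i ∈ (Finset.univ : Finset (Fin N)), v i j = 0 := hz j
        rw [this]
        simp
        positivity
      · intro hdN
        rw [Nat.sub_zero]
        have hN0 : 0 < N := by omega
        refine ⟨fun _ => ((N:ℚ) - d)/N, ?_, ?_, ?_, ?_, ?_⟩
        · intro i
          apply div_nonneg _ (by positivity)
          have : (d:ℚ) ≤ N := by exact_mod_cast hdN
          linarith
        · intro i
          rw [div_le_one (by exact_mod_cast hN0)]
          have : (0:ℚ) ≤ d := Nat.cast_nonneg d
          linarith
        · intro i hi
          exact absurd (Finset.mem_univ i) hi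
        · rw [Finset.sum_const, Finset.card_univ, Fintype.card_fin, nsmul_eq_mul]
          field_simp
        · intro j
          rw [← Finset.mul_sum]
          have : ∑ i ∈ (Finset.univ : Finset (Fin N)), (v i j : ℚ) = 0 := by
            exact_mod_cast congrArg (fun z : ℤ => (z:ℚ)) (hz j)
          rw [this, mul_zero]
    | succ m ih =>
      obtain ⟨A, hmono, hcard, huniv, hbound, hgood, hconst⟩ := ih
      by_cases hm : N ≤ m
      · have he : N - (m+1) = N - m := by omega
        exact ⟨A, hmono, fun k h1 h2 => hcard k (by omega) h2, huniv,
          fun k j h => hbound k j (by omega), by rw [he]; exact hgood, by rw [he]; exact hconst⟩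
      · have hk1N : N - m ≤ N := by omega
        have hk1pos : 1 ≤ N - m := by omega
        have hScard : (A (N - m)).card = N - m := hcard _ le_rfl hk1N
        -- pick the element to remove
        have hpick : ∃ i0 ∈ A (N - m), (N - m ≤ d ∨ GoodL N d v ((A (N-m)).erase i0)) := by
          by_cases hcase : d < N - m
          · obtain ⟨i0, hi0, hg⟩ := step_good N d v (A (N-m)) (by omega) (hgood (by omega))
            exact ⟨i0, hi0, Or.inr hg⟩
          · have : (A (N-m)).Nonempty := by
              rw [← Finset.card_pos, hScard]; omega
            obtain ⟨i0, hi0⟩ := this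
            exact ⟨i0, hi0, Or.inl (by omega)⟩
        obtain ⟨i0, hi0, halt⟩ := hpick
        set A' : ℕ → Finset (Fin N) := fun k => if k < N - m then (A (N-m)).erase i0 else A k
          with hA'
        have hA'lt : ∀ k, k < N - m → A' k = (A (N-m)).erase i0 := by
          intro k hk; rw [hA']; simp [hk]
        have hA'ge : ∀ k, N - m ≤ k → A' k = A k := by
          intro k hk; rw [hA']; simp [Nat.not_lt.mpr hk]
        have hecard : ((A (N-m)).erase i0).card = N - m - 1 := by
          rw [Finset.card_erase_of_mem hi0, hScard]
        have hebound : ∀ j, |∑ i ∈ (A (N-m)).erase i0, v i j| ≤ (d * r : ℤ) := by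
          intro j
          rcases halt with h | h
          · exact small_bound N d r v hv _ (by omega) j
          · exact good_bound N d r v hv _ h j
        have he : N - (m+1) = N - m - 1 := by omega
        refine ⟨A', ?_, ?_, ?_, ?_, ?_, ?_⟩
        · intro k
          by_cases h1 : k + 1 < N - m
          · rw [hA'lt k (by omega), hA'lt (k+1) h1]
        
          · by_cases h2 : k < N - m
            · rw [hA'lt k h2, hA'ge (k+1) (by omega)]
              have : k + 1 = N - m := by omega
              rw [this]
              exact Finset.erase_subset _ _
            · rw [hA'ge k (by omega), hA'ge (k+1) (by omega)]
              exact hmono k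
        · intro k h1 h2
          by_cases h3 : k < N - m
          · have : k = N - m - 1 := by omega
            rw [hA'lt k h3, hecard, this]
          · rw [hA'ge k (by omega)]
            exact hcard k (by omega) h2
        · intro k hk
          rw [hA'ge k (by omega)]
          exact huniv k hk
        · intro k j hk
          by_cases h3 : k < N - m
          · rw [hA'lt k h3]
            exact hebound j
          · rw [hA'ge k (by omega)]
            exact hbound k j (by omega)
        · intro hdk
          rw [he, hA'lt (N - m - 1) (by omega)]
          rcases halt with h | h
          · omega
          · exact h
        · intro k hk
          rw [he] at hk ⊢
          rw [hA'lt k (by omega), hA'lt (N - m - 1) (by omega)]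
  obtain ⟨A, hmono, hcard, huniv, hbound, _, _⟩ := main N
  exact ⟨A, hmono, fun k hk => hcard k (by omega) hk, fun k j => hbound k j (by omega)⟩

def clampI (M a : ℤ) : ℤ := max (-M) (min M a)

theorem clampI_diff (r M a : ℤ) (hr : 0 ≤ r) (hM : 0 ≤ M) :
    |clampI (M + r) a - clampI M a| ≤ r := by
  rw [abs_le, clampI, clampI]
  omega

theorem clampI_eq (M a : ℤ) (h : |a| ≤ M) : clampI M a = a := by
  rw [abs_le] at h
  rw [clampI]
  omega

theorem clampI_zero (a : ℤ) : clampI 0 a = 0 := by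
  rw [clampI]; omega

theorem dummy_exists (t r q d : ℕ) (w : Fin d → ℤ) (hw : ∀ j, |w j| ≤ (q:ℤ))
    (hqt : (q:ℤ) ≤ (t:ℤ) * r) :
    ∃ u : Fin t → Fin d → ℤ, (∀ i j, |u i j| ≤ (r:ℤ)) ∧ ∀ j, ∑ i, u i j = -(w j) := by
  refine ⟨fun i j => clampI (((i:ℕ):ℤ) * r + r) (-(w j)) - clampI (((i:ℕ):ℤ) * r) (-(w j)),
    ?_, ?_⟩
  · intro i j
    exact clampI_diff _ _ _ (by positivity) (by positivity)
  · intro j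
    rw [Fin.sum_univ_eq_sum_range
      (fun i => clampI ((i:ℤ) * r + r) (-(w j)) - clampI ((i:ℤ) * r) (-(w j))) t]
    have hcongr : ∀ i ∈ Finset.range t,
        clampI ((i:ℤ) * r + r) (-(w j)) - clampI ((i:ℤ) * r) (-(w j))
        = (fun m : ℕ => clampI ((m:ℤ) * r) (-(w j))) (i+1)
          - (fun m : ℕ => clampI ((m:ℤ) * r) (-(w j))) i := by
      intro i _
      simp only
      congr 2
      push_cast
      ring
    rw [Finset.sum_congr rfl hcongr,
      Finset.sum_range_sub (fun m : ℕ => clampI ((m:ℤ) * r) (-(w j)))]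
    have h0 : ((0:ℕ):ℤ) * r = 0 := by push_cast; ring
    rw [h0, clampI_zero, sub_zero]
    apply clampI_eq
    rw [abs_neg]
    calc |w j| ≤ (q:ℤ) := hw j
      _ ≤ (t:ℤ) * r := hqt

theorem stmt_1 (r d q n : ℕ) (hr : 0 < r) (hd : 0 < d) (hq : 0 < q)
    (hn : (⌈(q : ℚ) / r⌉₊ + 2) * (2 * r * d + 1) ^ d ≤ n)
    (x : Fin n → Fin d → ℤ)
    (hx : ∀ i j, |x i j| ≤ (r : ℤ))
    (hw : ∀ j, |∑ i, x i j| ≤ (q : ℤ)) :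
    ∃ S : Finset (Fin n), S.Nonempty ∧ S ≠ Finset.univ ∧ ∑ i ∈ S, x i = 0 := by
  classical
  set t := ⌈(q : ℚ) / r⌉₊ with ht
  -- q ≤ t * r
  have hqt : (q:ℤ) ≤ (t:ℤ) * r := by
    have h1 : (q:ℚ) / r ≤ t := Nat.le_ceil _
    have hr0 : (0:ℚ) < r := by exact_mod_cast hr
    rw [div_le_iff₀ hr0] at h1
    exact_mod_cast h1
  set N := n + t with hN
  obtain ⟨u, hu, husum⟩ := dummy_exists t r q d (fun j => ∑ i, x i j) hw hqt
  set y : Fin N → Fin d → ℤ := Fin.append x u with hy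
  have hyb : ∀ i j, |y i j| ≤ (r:ℤ) := by
    intro i j
    refine Fin.addCases ?_ ?_ i
    · intro i'
      rw [hy, Fin.append_left]
      exact hx i' j
    · intro i'
      rw [hy, Fin.append_right]
      exact hu i' j
  have hyz : ∀ j, ∑ i, y i j = 0 := by
    intro j
    rw [hy, Fin.sum_univ_add (fun i => Fin.append x u i j)]
    simp only [Fin.append_left, Fin.append_right]
    rw [husum j]
    ring
  obtain ⟨A, hmono, hcard, hbound⟩ := chain_exists N d r hd y hyb hyz
  have hmono' : Monotone A := monotone_nat_of_le_succ hmono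
  -- pigeonhole
  set box : Finset (Fin d → ℤ) :=
    Fintype.piFinset (fun _ : Fin d => Finset.Icc (-(d*r:ℤ)) (d*r)) with hbox
  have hboxcard : box.card = (2 * r * d + 1) ^ d := by
    rw [hbox, Fintype.card_piFinset]
    have : (Finset.Icc (-(d*r:ℤ)) (d*r)).card = 2 * r * d + 1 := by
      rw [Int.card_Icc]
      have : ((d:ℤ) * r + 1 - -((d:ℤ) * r)) = (2 * r * d + 1 : ℕ) := by push_cast; ring
      rw [this, Int.toNat_natCast]
    simp [this]
  set f : ℕ → (Fin d → ℤ) := fun k j => ∑ i ∈ A k, y i j with hf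
  have hmaps : ∀ k ∈ Finset.range (N+1), f k ∈ box := by
    intro k _
    rw [hbox, Fintype.mem_piFinset]
    intro j
    rw [Finset.mem_Icc, ← abs_le]
    have := hbound k j
    calc |f k j| = |∑ i ∈ A k, y i j| := rfl
      _ ≤ (d * r : ℤ) := this
      _ = (d:ℤ) * r := by push_cast; ring
  have hlt : box.card * (t + 2) < (Finset.range (N+1)).card := by
    rw [hboxcard, Finset.card_range]
    have : (t+2) * (2*r*d+1)^d ≤ n := hn
    calc (2*r*d+1)^d * (t+2) = (t+2) * (2*r*d+1)^d := by ring
      _ ≤ n := hn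
      _ < N + 1 := by omega
  obtain ⟨p, hp, hpcard⟩ :=
    Finset.exists_lt_card_fiber_of_mul_lt_card_of_maps_to hmaps hlt
  set T := (Finset.range (N+1)).filter (fun k => f k = p) with hT
  have hTcard : t + 3 ≤ T.card := hpcard
  set e := T.orderEmbOfCardLe hTcard with he
  have heT : ∀ a, e a ∈ T := fun a => T.orderEmbOfCardLe_mem hTcard a
  have heN : ∀ a, e a ≤ N := by
    intro a
    have := heT a
    rw [hT, Finset.mem_filter, Finset.mem_range] at this
    omega
  have hep : ∀ a, f (e a) = p := by
    intro a
    have := heT a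
    rw [hT, Finset.mem_filter] at this
    exact this.2
  -- blocks
  set blk := fun a : Fin (t+2) => A (e a.succ) \ A (e a.castSucc) with hblk
  have hsubblk : ∀ a : Fin (t+2), A (e a.castSucc) ⊆ A (e a.succ) := by
    intro a
    apply hmono'
    apply e.monotone
    rw [Fin.le_def]
    simp [Fin.val_succ]
  have hblksum : ∀ (a : Fin (t+2)) (j : Fin d), ∑ i ∈ blk a, y i j = 0 := by
    intro a j
    rw [hblk]
    rw [Finset.sum_sdiff_eq_sub (hsubblk a)]
    have h1 := congrFun (hep a.succ) j
    have h2 := congrFun (hep a.castSucc) j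
    rw [hf] at h1 h2
    simp only at h1 h2
    rw [h1, h2]
    ring
  have hblkne : ∀ a : Fin (t+2), (blk a).Nonempty := by
    intro a
    rw [hblk, ← Finset.card_pos, Finset.card_sdiff_of_subset (hsubblk a),
      hcard _ (heN _), hcard _ (heN _)]
    have : e a.castSucc < e a.succ := by
      apply e.strictMono
      rw [Fin.lt_def]
      simp [Fin.val_succ]
    omega
  have hblkdisj : ∀ a b : Fin (t+2), a < b → Disjoint (blk a) (blk b) := by
    intro a b hab
    have hsub : blk a ⊆ A (e b.castSucc) := by
      rw [hblk]
      refine subset_trans (Finset.sdiff_subset) ?_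
      apply hmono'
      apply e.monotone
      rw [Fin.le_def]
      simp only [Fin.val_succ, Fin.coe_castSucc]
      rw [Fin.lt_def] at hab
      omega
    rw [hblk]
    simp only
    exact Finset.disjoint_sdiff.mono_left hsub
  -- positivity of n and t
  have hpow : 1 ≤ (2*r*d+1)^d := Nat.one_le_pow _ _ (by omega)
  have hn0 : 0 < n := by
    have := hn
    nlinarith
  have hN0 : 0 < N := by omega
  have ht1 : 1 ≤ t := by
    rw [ht, Nat.one_le_ceil_iff]
    positivity
  -- dummy indices
  set Dum := Finset.univ.filter (fun i : Fin N => n ≤ (i:ℕ)) with hDum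
  have hDumcard : Dum.card ≤ t := by
    have h1 : Dum.card ≤ (Finset.univ : Finset (Fin t)).card := by
      apply Finset.card_le_card_of_injOn
        (fun i : Fin N => (⟨(i:ℕ) - n, by
          have h2 : (i:ℕ) < n + t := hN ▸ i.isLt
          omega⟩ : Fin t))
      · intro i _
        exact Finset.mem_univ _
      · intro i1 h1 i2 h2 heq
        rw [hDum, Finset.coe_filter] at h1 h2
        simp only [Set.mem_setOf_eq] at h1 h2
        simp only [Fin.mk.injEq] at heq
        apply Fin.ext
        omega
    rw [Finset.card_univ, Fintype.card_fin] at h1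
    exact h1
  -- bad blocks
  set Bad := Finset.univ.filter (fun a : Fin (t+2) => ∃ i ∈ blk a, n ≤ (i:ℕ)) with hBad
  have hBadcard : Bad.card ≤ t := by
    have hch : ∀ a : Fin (t+2), ∃ i : Fin N, a ∈ Bad → (i ∈ blk a ∧ n ≤ (i:ℕ)) := by
      intro a
      by_cases ha : a ∈ Bad
      · have ha' := ha
        rw [hBad, Finset.mem_filter] at ha'
        obtain ⟨i, h1, h2⟩ := ha'.2
        exact ⟨i, fun _ => ⟨h1, h2⟩⟩
      · exact ⟨⟨0, hN0⟩, fun h => absurd h ha⟩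
    choose g hg using hch
    refine le_trans (Finset.card_le_card_of_injOn g ?_ ?_) hDumcard
    · intro a ha
      rw [hDum, Finset.mem_coe, Finset.mem_filter]
      exact ⟨Finset.mem_univ _, (hg a ha).2⟩
    · intro a ha b hb heq
      have haBad : a ∈ Bad := ha
      have hbBad : b ∈ Bad := hb
      by_contra hne
      have hga : g a ∈ blk a := (hg a haBad).1
      have hgb : g b ∈ blk b := (hg b hbBad).1
      rcases lt_or_gt_of_ne hne with h | h
      · exact Finset.disjoint_left.mp (hblkdisj a b h) hga (heq ▸ hgb)
      · exact Finset.disjoint_left.mp (hblkdisj b a h) hgb (heq ▸ hga)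
  -- two good blocks
  obtain ⟨a, haB, b, hbB, hab⟩ : ∃ a ∈ Finset.univ \ Bad, ∃ b ∈ Finset.univ \ Bad, a ≠ b := by
    apply Finset.one_lt_card.mp
    rw [Finset.card_sdiff_of_subset (Finset.subset_univ _), Finset.card_univ, Fintype.card_fin]
    omega
  rw [Finset.mem_sdiff] at haB hbB
  have haB' := haB.2
  have hbB' := hbB.2
  have hgoodlt : ∀ c : Fin (t+2), c ∉ Bad → ∀ i ∈ blk c, (i:ℕ) < n := by
    intro c hc i hi
    by_contra h
    apply hc
    rw [hBad, Finset.mem_filter]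
    exact ⟨Finset.mem_univ _, i, hi, by omega⟩
  have hle : n ≤ N := by omega
  set S := Finset.univ.filter (fun i : Fin n => (Fin.castLE hle i) ∈ blk a) with hS
  have hmap : S.map (Fin.castLEEmb hle) = blk a := by
    ext i
    simp only [Finset.mem_map, hS, Finset.mem_filter, Finset.mem_univ, true_and,
      Fin.castLEEmb_apply]
    constructor
    · rintro ⟨i', hi', rfl⟩
      exact hi'
    · intro hi
      have hlt := hgoodlt a haB' i hi
      refine ⟨⟨(i:ℕ), hlt⟩, ?_, ?_⟩
      · have : Fin.castLE hle (⟨(i:ℕ), hlt⟩ : Fin n) = i := by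
          apply Fin.ext
          rfl
        rw [this]
        exact hi
      · apply Fin.ext
        rfl
  have hyx : ∀ (i : Fin n) (j : Fin d), y (Fin.castLE hle i) j = x i j := by
    intro i j
    have hcast : Fin.castLE hle i = Fin.castAdd t i := rfl
    rw [hy, hcast, Fin.append_left]
  refine ⟨S, ?_, ?_, ?_⟩
  · rw [← Finset.card_pos]
    have h1 : (S.map (Fin.castLEEmb hle)).card = (blk a).card := by rw [hmap]
    rw [Finset.card_map] at h1
    rw [h1, Finset.card_pos]
    exact hblkne a
  · intro hSuniv
    obtain ⟨i, hi⟩ := hblkne b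
    have hlt := hgoodlt b hbB' i hi
    have hmem : (⟨(i:ℕ), hlt⟩ : Fin n) ∈ S := hSuniv ▸ Finset.mem_univ _
    rw [hS, Finset.mem_filter] at hmem
    have hieq : Fin.castLE hle (⟨(i:ℕ), hlt⟩ : Fin n) = i := by apply Fin.ext; rfl
    rw [hieq] at hmem
    rcases lt_or_gt_of_ne hab with h | h
    · exact Finset.disjoint_left.mp (hblkdisj a b h) hmem.2 hi
    · exact Finset.disjoint_left.mp (hblkdisj b a h) hi hmem.2
  · funext j
    rw [Finset.sum_apply]
    simp only [Pi.zero_apply]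
    have h1 := hblksum a j
    rw [← hmap, Finset.sum_map] at h1
    rw [← h1]
    apply Finset.sum_congr rfl
    intro i _
    rw [Fin.castLEEmb_apply, hyx]
end

section
/- For any positive integers r, d, q: any sequence of n ≥ (⌈q/r⌉ + 2)·(2rd+1)^d vectors in ℤ^d with ℓ∞-norm at most r, whose sum z has ℓ∞-norm at most q, contains a subsequence of length at most (⌈q/r⌉ + 2)·(2rd+1)^d whose sum equals z. -/
namespace SteinitzAux

variable {N d : ℕ}

/-- Feasibility of a coefficient vector for the Steinitz polytope. -/
def IsFeas (v : Fin N → Fin d → ℚ) (A : Finset (Fin N)) (c : ℚ) (lam : Fin N → ℚ) : Prop :=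
  (∀ i, 0 ≤ lam i) ∧ (∀ i, lam i ≤ 1) ∧ (∀ i, i ∉ A → lam i = 0) ∧
  (∑ i ∈ A, lam i = c) ∧ (∀ t, ∑ i ∈ A, lam i * v i t = 0)

/-- Fractional coordinates. -/
def Frac (A : Finset (Fin N)) (lam : Fin N → ℚ) : Finset (Fin N) :=
  A.filter fun i => lam i ≠ 0 ∧ lam i ≠ 1


lemma exists_rel (v : Fin N → Fin d → ℚ) (F : Finset (Fin N)) (hF : d + 2 ≤ F.card) :
    ∃ mu : Fin N → ℚ, (∀ i, i ∉ F → mu i = 0) ∧ (∃ i ∈ F, mu i ≠ 0) ∧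
      (∑ i ∈ F, mu i = 0) ∧ (∀ t, ∑ i ∈ F, mu i * v i t = 0) := by
  set g : F → ((Fin d → ℚ) × ℚ) := fun i => (v i, 1) with hg
  have hnli : ¬ LinearIndependent ℚ g := by
    intro h
    have := h.fintype_card_le_finrank
    rw [Fintype.card_coe] at this
    have hfr : Module.finrank ℚ ((Fin d → ℚ) × ℚ) = d + 1 := by
      simp [Module.finrank_prod, Module.finrank_pi]
    omega
  rw [Fintype.not_linearIndependent_iff] at hnli
  obtain ⟨g0, hsum, i0, hi0⟩ := hnli
  refine ⟨fun i => if h : i ∈ F then g0 ⟨i, h⟩ else 0, fun i hi => by simp [hi], 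
    ⟨i0, i0.2, by simp [i0.2, hi0]⟩, ?_, ?_⟩
  · have := congrArg Prod.snd hsum
    rw [Prod.snd_sum] at this
    simp only [Prod.smul_snd, smul_eq_mul, mul_one, Prod.snd_zero] at this
    rw [← Finset.sum_attach F]
    simpa [hg] using this
  · intro t
    have := congrArg (fun p => p.1 t) hsum
    simp only [Prod.fst_sum, Finset.sum_apply, Prod.smul_fst, Pi.smul_apply,
      smul_eq_mul, Prod.fst_zero, Pi.zero_apply] at this
    rw [← Finset.sum_attach F (fun i => (if h : i ∈ F then g0 ⟨i, h⟩ else 0) * v i t)]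
    simpa using this

lemma reduce (v : Fin N → Fin d → ℚ) (A : Finset (Fin N)) (c : ℚ) (lam : Fin N → ℚ)
    (hf : IsFeas v A c lam) (hbig : d + 2 ≤ (Frac A lam).card) :
    ∃ lam', IsFeas v A c lam' ∧ (Frac A lam').card < (Frac A lam).card := by
  obtain ⟨h0, h1, hsupp, hsum, hv⟩ := hf
  set F := Frac A lam with hFdef
  have hFA : F ⊆ A := Finset.filter_subset _ _
  have hfrac : ∀ i ∈ F, 0 < lam i ∧ lam i < 1 := by
    intro i hi
    rw [hFdef, Frac, Finset.mem_filter] at hi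
    exact ⟨lt_of_le_of_ne (h0 i) (Ne.symm hi.2.1), lt_of_le_of_ne (h1 i) hi.2.2⟩
  obtain ⟨mu, hmusupp, ⟨i0, hi0F, hi0⟩, hmusum, hmuv⟩ := exists_rel v F hbig
  -- WLOG some positive entry
  have key : ∀ mu : Fin N → ℚ, (∀ i, i ∉ F → mu i = 0) → (∃ i ∈ F, 0 < mu i) →
      (∑ i ∈ F, mu i = 0) → (∀ t, ∑ i ∈ F, mu i * v i t = 0) →
      ∃ lam', IsFeas v A c lam' ∧ (Frac A lam').card < (Frac A lam).card := by
    intro mu hmusupp hpos hmusum hmuv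
    classical
    set E := F.filter (fun i => mu i ≠ 0) with hEdef
    have hEne : E.Nonempty := by
      obtain ⟨i, hiF, hi⟩ := hpos
      exact ⟨i, Finset.mem_filter.2 ⟨hiF, ne_of_gt hi⟩⟩
    set step : Fin N → ℚ := fun i => if 0 < mu i then (1 - lam i) / mu i else lam i / (-mu i)
      with hstep
    set t0 := E.inf' hEne step with ht0
    obtain ⟨istar, histar, htstar⟩ : ∃ i ∈ E, step i = t0 := by
      obtain ⟨i, hi, h⟩ := Finset.exists_mem_eq_inf' hEne step
      exact ⟨i, hi, h.symm⟩
    have hstep_pos : ∀ i ∈ E, 0 < step i := by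
      intro i hi
      rw [hEdef, Finset.mem_filter] at hi
      obtain ⟨hl, hu⟩ := hfrac i hi.1
      rw [hstep]
      rcases lt_or_gt_of_ne hi.2 with hneg | hposi
      · simp only [if_neg (not_lt.2 hneg.le)]
        exact div_pos hl (by linarith)
      · simp only [if_pos hposi]
        exact div_pos (by linarith) hposi
    have ht0pos : 0 < t0 := by
      rw [ht0, Finset.lt_inf'_iff]
      exact hstep_pos
    have ht0le : ∀ i ∈ E, t0 ≤ step i := fun i hi => Finset.inf'_le _ hi
    set lam' : Fin N → ℚ := fun i => lam i + t0 * mu i with hlam'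
    -- bounds
    have hbnd : ∀ i, 0 ≤ lam' i ∧ lam' i ≤ 1 := by
      intro i
      by_cases hiE : i ∈ E
      · have hmu : mu i ≠ 0 := (Finset.mem_filter.1 hiE).2
        have hiF : i ∈ F := (Finset.mem_filter.1 hiE).1
        obtain ⟨hl, hu⟩ := hfrac i hiF
        have := ht0le i hiE
        rcases lt_or_gt_of_ne hmu with hneg | hposi
        · rw [hstep] at this; simp only [if_neg (not_lt.2 hneg.le)] at this
          have h2 : t0 * (-mu i) ≤ lam i := by
            calc t0 * (-mu i) ≤ (lam i / (-mu i)) * (-mu i) := by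
                  apply mul_le_mul_of_nonneg_right this (by linarith)
            _ = lam i := by field_simp
          constructor
          · rw [hlam']; simp only; nlinarith
          · rw [hlam']; simp only; nlinarith
        · rw [hstep] at this; simp only [if_pos hposi] at this
          have h2 : t0 * mu i ≤ 1 - lam i := by
            calc t0 * mu i ≤ ((1 - lam i) / mu i) * mu i := by
                  apply mul_le_mul_of_nonneg_right this hposi.le
            _ = 1 - lam i := by field_simp
          constructor
          · rw [hlam']; simp only; nlinarith
          · rw [hlam']; simp only; nlinarith
      · have hmu : mu i = 0 := by
          by_cases hiF : i ∈ F
          · by_contra h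
            exact hiE (Finset.mem_filter.2 ⟨hiF, h⟩)
          · exact hmusupp i hiF
        rw [hlam']; simp only [hmu, mul_zero, add_zero]
        exact ⟨h0 i, h1 i⟩
    have hmusuppA : ∀ i, i ∉ A → mu i = 0 := fun i hi => hmusupp i (fun h => hi (hFA h))
    have hmusumA : ∑ i ∈ A, mu i = 0 := by
      rw [← Finset.sum_subset hFA (fun i hiA hiF => hmusupp i hiF)]
      exact hmusum
    have hmuvA : ∀ t, ∑ i ∈ A, mu i * v i t = 0 := by
      intro t
      rw [← Finset.sum_subset hFA (fun i hiA hiF => by rw [hmusupp i hiF, zero_mul])]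
      exact hmuv t
    refine ⟨lam', ⟨fun i => (hbnd i).1, fun i => (hbnd i).2, ?_, ?_, ?_⟩, ?_⟩
    · intro i hi; rw [hlam']; simp only [hsupp i hi, hmusuppA i hi, mul_zero, add_zero]
    · rw [hlam']; simp only
      rw [Finset.sum_add_distrib, hsum, ← Finset.mul_sum, hmusumA, mul_zero, add_zero]
    · intro t
      rw [hlam']; simp only
      have : ∀ i ∈ A, (lam i + t0 * mu i) * v i t = lam i * v i t + t0 * (mu i * v i t) := by
        intro i _; ring
      rw [Finset.sum_congr rfl this, Finset.sum_add_distrib, hv t, ← Finset.mul_sum,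
        hmuvA t, mul_zero, add_zero]
    · -- cardinality decreases
      have hsub : Frac A lam' ⊆ F.erase istar := by
        intro i hi
        rw [Frac, Finset.mem_filter] at hi
        obtain ⟨hiA, hne0, hne1⟩ := hi
        have hiF : i ∈ F := by
          by_contra hiF
          have hmu : mu i = 0 := hmusupp i hiF
          have : lam' i = lam i := by rw [hlam']; simp [hmu]
          rw [this] at hne0 hne1
          exact hiF (Finset.mem_filter.2 ⟨hiA, hne0, hne1⟩)
        refine Finset.mem_erase.2 ⟨?_, hiF⟩
        intro h
        subst h
        have hmu : mu i ≠ 0 := (Finset.mem_filter.1 histar).2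
        rcases lt_or_gt_of_ne hmu with hneg | hposi
        · apply hne0
          rw [hlam']; simp only
          rw [hstep] at htstar; simp only [if_neg (not_lt.2 hneg.le)] at htstar
          have h3 : -mu i ≠ 0 := by intro h; apply hmu; linarith
          have h4 : lam i = t0 * -mu i := (div_eq_iff h3).1 htstar
          rw [h4]; ring
        · apply hne1
          rw [hlam']; simp only
          rw [hstep] at htstar; simp only [if_pos hposi] at htstar
          have h4 : 1 - lam i = t0 * mu i := (div_eq_iff (ne_of_gt hposi)).1 htstar
          linarith
      calc (Frac A lam').card ≤ (F.erase istar).card := Finset.card_le_card hsub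
        _ < F.card := by
            rw [Finset.card_erase_of_mem (Finset.mem_filter.1 histar).1]
            have : 0 < F.card := by omega
            omega
  rcases lt_or_gt_of_ne hi0 with hneg | hposi
  · apply key (fun i => -mu i)
    · intro i hi; show -mu i = 0; rw [hmusupp i hi, neg_zero]
    · exact ⟨i0, hi0F, by show 0 < -mu i0; linarith⟩
    · show ∑ i ∈ F, -mu i = 0
      rw [Finset.sum_neg_distrib, hmusum, neg_zero]
    · intro t; show ∑ i ∈ F, -mu i * v i t = 0
      have h5 : ∀ i ∈ F, -mu i * v i t = -(mu i * v i t) := fun i _ => by ring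
      rw [Finset.sum_congr rfl h5, Finset.sum_neg_distrib, hmuv t, neg_zero]
  · exact key mu hmusupp ⟨i0, hi0F, hposi⟩ hmusum hmuv

lemma minfrac (v : Fin N → Fin d → ℚ) (A : Finset (Fin N)) (c : ℚ) (lam : Fin N → ℚ)
    (hf : IsFeas v A c lam) :
    ∃ lam', IsFeas v A c lam' ∧ (Frac A lam').card ≤ d + 1 := by
  generalize hk : (Frac A lam).card = k at *
  induction k using Nat.strong_induction_on generalizing lam with
  | _ k ih =>
    by_cases hbig : d + 2 ≤ k
    · obtain ⟨lam', hf', hlt⟩ := reduce v A c lam hf (by omega)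
      exact ih _ (by omega) lam' hf' rfl
    · exact ⟨lam, hf, by omega⟩

lemma descent (v : Fin N → Fin d → ℚ) (A : Finset (Fin N)) (lam : Fin N → ℚ)
    (hcard : d + 1 ≤ A.card)
    (hf : IsFeas v A ((A.card : ℚ) - d) lam) :
    ∃ i ∈ A, ∃ lam', IsFeas v (A.erase i) (((A.erase i).card : ℚ) - d) lam' := by
  -- scale down to sum = card - 1 - d
  have hden : (0:ℚ) < (A.card : ℚ) - d := by
    have : (d:ℚ) + 1 ≤ (A.card : ℚ) := by exact_mod_cast hcard
    linarith
  set f : ℚ := ((A.card : ℚ) - 1 - d) / ((A.card : ℚ) - d) with hfdef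
  have hf0 : 0 ≤ f := by
    apply div_nonneg _ hden.le
    have : (d:ℚ) + 1 ≤ (A.card : ℚ) := by exact_mod_cast hcard
    linarith
  have hf1 : f ≤ 1 := by
    rw [hfdef, div_le_one hden]; linarith
  obtain ⟨h0, h1, hsupp, hsum, hv⟩ := hf
  have hfeas0 : IsFeas v A ((A.card : ℚ) - 1 - d) (fun i => f * lam i) := by
    refine ⟨fun i => mul_nonneg hf0 (h0 i), fun i => ?_, fun i hi => by show f * lam i = 0; rw [hsupp i hi, mul_zero],
      ?_, fun t => ?_⟩
    · calc f * lam i ≤ 1 * 1 := mul_le_mul hf1 (h1 i) (h0 i) zero_le_one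
      _ = 1 := by ring
    · rw [← Finset.mul_sum, hsum, hfdef]
      field_simp
    · have : ∀ i ∈ A, f * lam i * v i t = f * (lam i * v i t) := fun i _ => by ring
      rw [Finset.sum_congr rfl this, ← Finset.mul_sum, hv t, mul_zero]
  obtain ⟨lam', hf', hfr⟩ := minfrac v A _ _ hfeas0
  -- find a zero coordinate
  obtain ⟨h0', h1', hsupp', hsum', hv'⟩ := hf'
  have hzero : ∃ i ∈ A, lam' i = 0 := by
    by_contra hno
    push_neg at hno
    set F := Frac A lam' with hF
    have hFsub : F ⊆ A := Finset.filter_subset _ _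
    have hone : ∀ i ∈ A \ F, lam' i = 1 := by
      intro i hi
      rw [Finset.mem_sdiff] at hi
      have := hi.2
      rw [hF, Frac, Finset.mem_filter, not_and] at this
      have h2 := this hi.1
      rcases not_and_or.1 h2 with h | h
      · exact (hno i hi.1 (not_not.1 h)).elim
      · exact not_not.1 h
    have hsplit : ∑ i ∈ A, lam' i = ∑ i ∈ A \ F, lam' i + ∑ i ∈ F, lam' i :=
      (Finset.sum_sdiff hFsub).symm
    have hsum1 : ∑ i ∈ A \ F, lam' i = ((A.card : ℚ) - F.card) := by
      rw [Finset.sum_congr rfl hone, Finset.sum_const, nsmul_eq_mul, mul_one,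
        Finset.card_sdiff_of_subset hFsub]
      have := Finset.card_le_card hFsub
      push_cast [Nat.cast_sub this]
      ring
    have hFpos : 0 ≤ ∑ i ∈ F, lam' i := Finset.sum_nonneg (fun i _ => h0' i)
    have hFlt : (F.card : ℚ) ≤ d + 1 := by exact_mod_cast hfr
    -- sum over F = F.card - d - 1 ≤ 0, but each term > 0 on F
    have hFsum : ∑ i ∈ F, lam' i = (F.card : ℚ) - d - 1 := by
      have := hsum'
      rw [hsplit, hsum1] at this
      linarith
    by_cases hFe : F.Nonempty
    · have hpos : 0 < ∑ i ∈ F, lam' i := by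
        apply Finset.sum_pos _ hFe
        intro i hi
        rw [hF, Frac, Finset.mem_filter] at hi
        exact lt_of_le_of_ne (h0' i) (Ne.symm hi.2.1)
      rw [hFsum] at hpos
      have : 1 ≤ F.card := Finset.card_pos.2 hFe
      have hd0 : (0:ℚ) ≤ d := by positivity
      nlinarith [hFlt]
    · rw [Finset.not_nonempty_iff_eq_empty] at hFe
      rw [hFe] at hFsum
      simp at hFsum
      have hd0 : (0:ℚ) ≤ d := by positivity
      linarith
  obtain ⟨i, hiA, hi0⟩ := hzero
  refine ⟨i, hiA, lam', h0', h1', ?_, ?_, ?_⟩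
  · intro j hj
    by_cases hji : j = i
    · rw [hji]; exact hi0
    · exact hsupp' j (fun h => hj (Finset.mem_erase.2 ⟨hji, h⟩))
  · rw [Finset.sum_erase _ hi0, hsum', Finset.card_erase_of_mem hiA]
    have : 1 ≤ A.card := by omega
    push_cast [Nat.cast_sub this]
    ring
  · intro t
    rw [Finset.sum_erase _ (by rw [hi0, zero_mul]), hv' t]

lemma list_abs_sum_le (r : ℚ) (l : List ℚ) (h : ∀ a ∈ l, |a| ≤ r) :
    |l.sum| ≤ l.length * r := by
  induction l with
  | nil => simp
  | cons a l ih =>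
    have h1 : |a| ≤ r := h a List.mem_cons_self
    have h2 := ih (fun b hb => h b (List.mem_cons_of_mem a hb))
    calc |(a :: l).sum| = |a + l.sum| := by rw [List.sum_cons]
      _ ≤ |a| + |l.sum| := abs_add_le _ _
      _ ≤ r + l.length * r := add_le_add h1 h2
      _ = (a :: l).length * r := by rw [List.length_cons]; push_cast; ring

lemma sum_A_bound (v : Fin N → Fin d → ℚ) (r : ℚ) (hv : ∀ i t, |v i t| ≤ r)
    (A : Finset (Fin N)) (lam : Fin N → ℚ)
    (hf : IsFeas v A ((A.card : ℚ) - d) lam) (t : Fin d) :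
    |∑ i ∈ A, v i t| ≤ d * r := by
  obtain ⟨h0, h1, hsupp, hsum, hvs⟩ := hf
  have key : ∑ i ∈ A, v i t = ∑ i ∈ A, (1 - lam i) * v i t := by
    have : ∀ i ∈ A, (1 - lam i) * v i t = v i t - lam i * v i t := fun i _ => by ring
    rw [Finset.sum_congr rfl this, Finset.sum_sub_distrib, hvs t, sub_zero]
  rw [key]
  calc |∑ i ∈ A, (1 - lam i) * v i t| ≤ ∑ i ∈ A, |(1 - lam i) * v i t| :=
        Finset.abs_sum_le_sum_abs _ _
    _ ≤ ∑ i ∈ A, (1 - lam i) * r := by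
        apply Finset.sum_le_sum
        intro i _
        rw [abs_mul, abs_of_nonneg (by linarith [h1 i] : (0:ℚ) ≤ 1 - lam i)]
        apply mul_le_mul_of_nonneg_left (hv i t) (by linarith [h1 i])
    _ = d * r := by
        rw [← Finset.sum_mul, Finset.sum_sub_distrib, hsum, Finset.sum_const, nsmul_eq_mul,
          mul_one]
        ring

lemma order (v : Fin N → Fin d → ℚ) (r : ℚ) (hr : 0 ≤ r) (hv : ∀ i t, |v i t| ≤ r)
    (A : Finset (Fin N)) (hA : d < A.card → ∃ lam, IsFeas v A ((A.card : ℚ) - d) lam) :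
    ∃ l : List (Fin N), l.Nodup ∧ l.toFinset = A ∧
      ∀ k t, |((l.take k).map (fun i => v i t)).sum| ≤ d * r := by
  generalize hc : A.card = c at *
  induction c using Nat.strong_induction_on generalizing A with
  | _ c ih =>
    by_cases hle : c ≤ d
    · refine ⟨A.toList, A.nodup_toList, A.toList_toFinset, ?_⟩
      intro k t
      calc |((A.toList.take k).map (fun i => v i t)).sum|
          ≤ ((A.toList.take k).map (fun i => v i t)).length * r := by
            apply list_abs_sum_le
            intro a ha
            obtain ⟨i, _, rfl⟩ := List.mem_map.1 ha
            exact hv i t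
        _ ≤ d * r := by
            apply mul_le_mul_of_nonneg_right _ hr
            rw [List.length_map]
            have h1 : (A.toList.take k).length ≤ A.toList.length := by
              rw [List.length_take]; omega
            rw [Finset.length_toList, hc] at h1
            exact_mod_cast le_trans (Nat.cast_le.2 h1) (Nat.cast_le.2 hle)
    · obtain ⟨lam, hlam⟩ := hA (by omega)
      obtain ⟨i, hiA, lam', hlam'⟩ := descent v A lam (by omega) (by rw [hc]; exact hlam)
      have hcard' : (A.erase i).card = c - 1 := by
        rw [Finset.card_erase_of_mem hiA, hc]
      obtain ⟨l', hnd', htf', hpre'⟩ := ih (c-1) (by omega) (A.erase i)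
        hcard' (fun _ => ⟨lam', by rw [hcard'] at hlam'; exact hlam'⟩)
      refine ⟨l' ++ [i], ?_, ?_, ?_⟩
      · rw [List.nodup_append]
        refine ⟨hnd', List.nodup_singleton i, ?_⟩
        intro a ha b hb hai
        rw [List.mem_singleton] at hb; rw [hb] at hai
        have h2 : a ∈ A.erase i := htf' ▸ List.mem_toFinset.2 ha
        exact (Finset.mem_erase.1 h2).1 hai
      · rw [List.toFinset_append, htf']
        simp only [List.toFinset_cons, List.toFinset_nil, LawfulSingleton.insert_empty_eq]
        rw [Finset.union_comm, ← Finset.insert_eq, Finset.insert_erase hiA]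
      · intro k t
        by_cases hk : k ≤ l'.length
        · rw [List.take_append_of_le_length hk]
          exact hpre' k t
        · rw [List.take_of_length_le (by rw [List.length_append]; simp; omega)]
          have hsum_eq : ((l' ++ [i]).map (fun j => v j t)).sum = ∑ j ∈ A, v j t := by
            rw [← List.sum_toFinset _ (by
              rw [List.nodup_append]
              refine ⟨hnd', List.nodup_singleton i, ?_⟩
              intro a ha b hb hai
              rw [List.mem_singleton] at hb; rw [hb] at hai
              have h2 : a ∈ A.erase i := htf' ▸ List.mem_toFinset.2 ha
              exact (Finset.mem_erase.1 h2).1 hai)]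
            congr 1
            rw [List.toFinset_append, htf']
            simp only [List.toFinset_cons, List.toFinset_nil, LawfulSingleton.insert_empty_eq]
            rw [Finset.union_comm, ← Finset.insert_eq, Finset.insert_erase hiA]
          rw [hsum_eq]
          exact sum_A_bound v r hv A lam (by rw [hc]; exact hlam) t

lemma steinitz (v : Fin N → Fin d → ℚ) (r : ℚ) (hr : 0 ≤ r) (hv : ∀ i t, |v i t| ≤ r)
    (hs : ∀ t, ∑ i, v i t = 0) :
    ∃ l : List (Fin N), l.Nodup ∧ l.toFinset = Finset.univ ∧
      ∀ k t, |((l.take k).map (fun i => v i t)).sum| ≤ d * r := by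
  apply order v r hr hv
  intro hNd
  rw [Finset.card_univ, Fintype.card_fin] at hNd ⊢
  have hN : (0:ℚ) < N := by
    have : 0 < N := by omega
    exact_mod_cast this
  refine ⟨fun _ => ((N:ℚ) - d) / N, ?_, ?_, ?_, ?_, ?_⟩
  · intro i
    apply div_nonneg _ hN.le
    have : (d:ℚ) < N := by exact_mod_cast hNd
    linarith
  · intro i
    rw [div_le_one hN]
    have : (0:ℚ) ≤ d := by positivity
    linarith
  · intro i hi; exact (hi (Finset.mem_univ i)).elim
  · rw [Finset.sum_const, Finset.card_univ, Fintype.card_fin, nsmul_eq_mul]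
    field_simp
  · intro t
    have hb : ∀ i ∈ Finset.univ, ((fun _ : Fin N => ((N:ℚ) - d) / N) i) * v i t
        = (((N:ℚ) - d) / N) * v i t := fun i _ => rfl
    rw [Finset.sum_congr rfl hb, ← Finset.mul_sum, hs t, mul_zero]

lemma zero_subset (r d q n : ℕ) (hr : 0 < r) (hq : 0 < q)
    (hn : (⌈(q : ℚ) / r⌉₊ + 2) * (2 * r * d + 1) ^ d ≤ n)
    (x : Fin n → Fin d → ℤ)
    (hx : ∀ i j, |x i j| ≤ (r : ℤ))
    (hw : ∀ j, |∑ i, x i j| ≤ (q : ℤ)) :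
    ∃ U : Finset (Fin n), U.Nonempty ∧ ∀ t, ∑ i ∈ U, x i t = 0 := by
  classical
  set m : ℕ := ⌈(q : ℚ) / r⌉₊ with hm
  have hrQ : (0:ℚ) < r := by exact_mod_cast hr
  have hm1 : 1 ≤ m := by
    rw [hm, Nat.one_le_ceil_iff]
    positivity
  have hmQ : (0:ℚ) < m := by exact_mod_cast hm1
  have hqmr : (q:ℚ) ≤ m * r := by
    have h1 : (q:ℚ)/r ≤ m := Nat.le_ceil _
    rw [div_le_iff₀ hrQ] at h1
    exact h1
  set z : Fin d → ℤ := fun t => ∑ i, x i t with hz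
  set y : Fin (n+m) → Fin d → ℤ :=
    fun i t => if h : (i : ℕ) < n then x ⟨i.1, h⟩ t else 0 with hy
  set w : Fin (n+m) → Fin d → ℚ :=
    fun i t => if h : (i : ℕ) < n then ((x ⟨i.1, h⟩ t : ℤ) : ℚ) else -(z t) / m with hwdef
  have hvb : ∀ i t, |w i t| ≤ (r:ℚ) := by
    intro i t
    by_cases h : (i:ℕ) < n
    · simp only [hwdef, dif_pos h]
      exact_mod_cast hx ⟨i.1, h⟩ t
    · simp only [hwdef, dif_neg h]
      rw [abs_div, abs_neg]
      have h2 : |(m:ℚ)| = m := abs_of_pos hmQ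
      rw [h2, div_le_iff₀ hmQ]
      have h1 : |(z t : ℚ)| ≤ (q:ℚ) := by exact_mod_cast hw t
      calc |(z t : ℚ)| ≤ (q:ℚ) := h1
        _ ≤ m * r := hqmr
        _ = r * m := by ring
  have hsum0 : ∀ t, ∑ i : Fin (n+m), w i t = 0 := by
    intro t
    rw [Fin.sum_univ_add (f := fun i => w i t)]
    have e1 : ∀ j : Fin n, w (Fin.castAdd m j) t = ((x j t : ℤ) : ℚ) := by
      intro j
      have hj : ((Fin.castAdd m j : Fin (n+m)) : ℕ) < n := by
        rw [Fin.coe_castAdd]; exact j.2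
      simp only [hwdef, dif_pos hj]
      have hjj : (⟨((Fin.castAdd m j : Fin (n+m)) : ℕ), hj⟩ : Fin n) = j := by
        apply Fin.ext; rw [Fin.coe_castAdd]
      rw [hjj]
    have e2 : ∀ j : Fin m, w (Fin.natAdd n j) t = -(z t) / m := by
      intro j
      have hj : ¬ ((Fin.natAdd n j : Fin (n+m)) : ℕ) < n := by
        rw [Fin.coe_natAdd]; omega
      simp only [hwdef, dif_neg hj]
    rw [Finset.sum_congr rfl (fun j _ => e1 j), Finset.sum_congr rfl (fun j _ => e2 j)]
    rw [Finset.sum_const, Finset.card_univ, Fintype.card_fin, nsmul_eq_mul]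
    have h3 : ∑ j : Fin n, ((x j t : ℤ):ℚ) = ((z t : ℤ) : ℚ) := by
      rw [hz]; push_cast; rfl
    rw [h3]
    field_simp
    ring
  obtain ⟨l, hnd, htf, hpre⟩ := steinitz w (r:ℚ) hrQ.le hvb hsum0
  have hlen : l.length = n + m := by
    have h1 := List.toFinset_card_of_nodup hnd
    rw [htf, Finset.card_univ, Fintype.card_fin] at h1
    omega
  set A : ℕ → Finset (Fin (n+m)) := fun k => (l.take k).toFinset with hA
  set Sk : ℕ → Fin d → ℤ :=
    fun k t => ∑ i ∈ (A k).filter (fun i => i.1 < n), y i t with hSk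
  set jk : ℕ → ℕ := fun k => ((A k).filter (fun i => ¬ i.1 < n)).card with hjk
  have hndk : ∀ k : ℕ, (l.take k).Nodup := fun k => hnd.sublist (List.take_sublist k l)
  have hsplit : ∀ (k : ℕ) t, ((l.take k).map (fun i => w i t)).sum
      = ((Sk k t : ℤ) : ℚ) + (jk k) * (-(z t) / m) := by
    intro k t
    rw [← List.sum_toFinset _ (hndk k)]
    simp only [hSk, hjk, hA]
    rw [← Finset.sum_filter_add_sum_filter_not ((l.take k).toFinset) (fun i => i.1 < n)]
    congr 1
    · push_cast
      apply Finset.sum_congr rfl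
      intro i hi
      have h : i.1 < n := (Finset.mem_filter.1 hi).2
      simp only [hwdef, hy, dif_pos h]
    · have hc : ∀ i ∈ Finset.filter (fun i => ¬ i.1 < n) (l.take k).toFinset,
          w i t = -(z t)/m := by
        intro i hi
        have h : ¬ i.1 < n := (Finset.mem_filter.1 hi).2
        simp only [hwdef, dif_neg h]
      rw [Finset.sum_congr rfl hc, Finset.sum_const, nsmul_eq_mul]
  have hbound : ∀ (k : ℕ) t, |((Sk k t : ℤ) : ℚ) - (jk k) * (z t) / m| ≤ (d:ℚ) * r := by
    intro k t
    have h1 := hpre k t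
    rw [hsplit k t] at h1
    have he : ((Sk k t : ℤ) : ℚ) + (jk k) * (-(z t) / m)
        = ((Sk k t : ℤ) : ℚ) - (jk k) * (z t) / m := by ring
    rw [he] at h1
    exact h1
  have hnm : n ≤ n + m := Nat.le_add_right n m
  have hjm : ∀ k : ℕ, jk k ≤ m := by
    intro k
    have hsub : (A k).filter (fun i => ¬ i.1 < n)
        ⊆ Finset.univ.filter (fun i : Fin (n+m) => ¬ i.1 < n) :=
      Finset.filter_subset_filter _ (Finset.subset_univ _)
    have hceq : Finset.univ.filter (fun i : Fin (n+m) => i.1 < n)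
        = Finset.map (Fin.castLEEmb hnm) Finset.univ := by
      ext i
      rw [Finset.mem_filter, Finset.mem_map]
      constructor
      · intro h
        exact ⟨⟨i.1, h.2⟩, Finset.mem_univ _, by apply Fin.ext; simp⟩
      · rintro ⟨j, -, rfl⟩
        exact ⟨Finset.mem_univ _, by simpa using j.2⟩
    have hcard : (Finset.univ.filter (fun i : Fin (n+m) => ¬ i.1 < n)).card = m := by
      have h1 := Finset.card_filter_add_card_filter_not
        (s := (Finset.univ : Finset (Fin (n+m)))) (p := fun i => i.1 < n)
      rw [hceq, Finset.card_map, Finset.card_univ, Fintype.card_fin, Finset.card_univ,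
        Fintype.card_fin] at h1
      omega
    calc jk k ≤ (Finset.univ.filter (fun i : Fin (n+m) => ¬ i.1 < n)).card :=
          Finset.card_le_card hsub
      _ = m := hcard
  have hAcard : ∀ k : ℕ, k ≤ n + m → (A k).card = k := by
    intro k hk
    show (l.take k).toFinset.card = k
    rw [List.toFinset_card_of_nodup (hndk k), List.length_take, hlen]
    omega
  set lo : ℕ → Fin d → ℤ := fun j t => ⌈(j:ℚ) * z t / m - (d:ℚ)*r⌉ with hlo
  have hlow : ∀ (k : ℕ) t, lo (jk k) t ≤ Sk k t := by
    intro k t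
    show ⌈(jk k : ℚ) * z t / m - (d:ℚ)*r⌉ ≤ Sk k t
    apply Int.ceil_le.2
    have h1 := (abs_le.1 (hbound k t)).1
    push_cast
    push_cast at h1
    linarith
  have hhigh : ∀ (k : ℕ) t, Sk k t - lo (jk k) t ≤ ((2*r*d : ℕ) : ℤ) := by
    intro k t
    have h1 := (abs_le.1 (hbound k t)).2
    have h2 : ((jk k : ℚ) * z t / m - (d:ℚ)*r) ≤ ((lo (jk k) t : ℤ) : ℚ) := Int.le_ceil _
    have h3 : ((Sk k t - lo (jk k) t : ℤ) : ℚ) ≤ ((2*r*d : ℕ) : ℚ) := by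
      push_cast
      push_cast at h1 h2
      linarith
    exact_mod_cast h3
  have htoNat : ∀ (a b : ℤ) (c : ℕ), b ≤ a → a - b ≤ (c:ℤ) → (a-b).toNat < c+1 := by
    intro a b c h1 h2; omega
  set key : Fin (n+m+1) → Fin (m+1) × (Fin d → Fin (2*r*d+1)) :=
    fun k => (⟨jk k.1, Nat.lt_succ_of_le (hjm k.1)⟩,
      fun t => ⟨(Sk k.1 t - lo (jk k.1) t).toNat,
        htoNat _ _ _ (hlow k.1 t) (hhigh k.1 t)⟩) with hkey
  have hB1 : 1 ≤ (2*r*d+1)^d := Nat.one_le_pow d (2*r*d+1) (by omega)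
  have hcardlt : Fintype.card (Fin (m+1) × (Fin d → Fin (2*r*d+1)))
      < Fintype.card (Fin (n+m+1)) := by
    simp only [Fintype.card_prod, Fintype.card_fun, Fintype.card_fin]
    nlinarith [hn, hB1]
  obtain ⟨k1, k2, hne, heqk⟩ := Fintype.exists_ne_map_eq_of_card_lt key hcardlt
  have hmain : ∀ a b : Fin (n+m+1), a.1 < b.1 → key a = key b →
      ∃ U : Finset (Fin n), U.Nonempty ∧ ∀ t, ∑ i ∈ U, x i t = 0 := by
    intro a b hab heq
    have hja : jk a.1 = jk b.1 := congrArg (fun p => (p.1 : ℕ)) heq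
    have hSa : ∀ t, Sk a.1 t = Sk b.1 t := by
      intro t
      have h := congrArg (fun p => ((p.2 t : ℕ))) heq
      simp only [hkey] at h
      have h2 := hlow a.1 t
      have h3 := hlow b.1 t
      rw [hja] at h2 h
      omega
    have hsub : A a.1 ⊆ A b.1 := by
      intro i hi
      have h1 : l.take a.1 = (l.take b.1).take a.1 := by
        rw [List.take_take, min_eq_left hab.le]
      have hi2 : i ∈ l.take a.1 := List.mem_toFinset.1 hi
      rw [h1] at hi2
      exact List.mem_toFinset.2 (List.take_subset _ _ hi2)
    have ha2 : a.1 ≤ n + m := by omega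
    have hb2 : b.1 ≤ n + m := by omega
    have hDne : (A b.1 \ A a.1).Nonempty := by
      apply Finset.card_pos.1
      rw [Finset.card_sdiff_of_subset hsub, hAcard a.1 ha2, hAcard b.1 hb2]
      omega
    have hfeq : (A a.1).filter (fun i => ¬ i.1 < n) = (A b.1).filter (fun i => ¬ i.1 < n) := by
      apply Finset.eq_of_subset_of_card_le (Finset.filter_subset_filter _ hsub)
      have e1 : ((A a.1).filter (fun i => ¬ i.1 < n)).card = jk a.1 := rfl
      have e2 : ((A b.1).filter (fun i => ¬ i.1 < n)).card = jk b.1 := rfl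
      rw [e1, e2, hja]
    have hDlt : ∀ i ∈ A b.1 \ A a.1, i.1 < n := by
      intro i hi
      by_contra hcon
      have h1 : i ∈ (A b.1).filter (fun i => ¬ i.1 < n) :=
        Finset.mem_filter.2 ⟨(Finset.mem_sdiff.1 hi).1, hcon⟩
      rw [← hfeq] at h1
      exact (Finset.mem_sdiff.1 hi).2 (Finset.filter_subset _ _ h1)
    have hAsum : ∀ (k : ℕ) t, ∑ i ∈ A k, y i t = Sk k t := by
      intro k t
      conv_lhs => rw [← Finset.sum_filter_add_sum_filter_not (A k) (fun i => i.1 < n)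
        (fun i => y i t)]
      have h2 : ∀ i ∈ (A k).filter (fun i => ¬ i.1 < n), y i t = 0 := by
        intro i hi
        have h := (Finset.mem_filter.1 hi).2
        simp only [hy, dif_neg h]
      rw [Finset.sum_congr rfl h2, Finset.sum_const, smul_zero, add_zero]
    have hDsum : ∀ t, ∑ i ∈ A b.1 \ A a.1, y i t = 0 := by
      intro t
      have h3 := Finset.sum_sdiff hsub (f := fun i => y i t)
      rw [hAsum a.1 t, hAsum b.1 t, hSa t] at h3
      linarith
    refine ⟨Finset.univ.filter (fun i : Fin n => Fin.castLE hnm i ∈ A b.1 \ A a.1), ?_, ?_⟩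
    · obtain ⟨i0, hi0⟩ := hDne
      have h4 := hDlt i0 hi0
      refine ⟨⟨i0.1, h4⟩, Finset.mem_filter.2 ⟨Finset.mem_univ _, ?_⟩⟩
      have h5 : Fin.castLE hnm (⟨i0.1, h4⟩ : Fin n) = i0 := by apply Fin.ext; simp
      rw [h5]
      exact hi0
    · intro t
      rw [← hDsum t]
      apply Finset.sum_bij (fun i _ => Fin.castLE hnm i)
      · intro i hi
        exact (Finset.mem_filter.1 hi).2
      · intro i1 h1 i2 h2 hi
        apply Fin.ext
        have h8 := congrArg Fin.val hi
        exact h8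
      · intro j hj
        have h4 := hDlt j hj
        refine ⟨⟨j.1, h4⟩, Finset.mem_filter.2 ⟨Finset.mem_univ _, ?_⟩, ?_⟩
        · have h5 : Fin.castLE hnm (⟨j.1, h4⟩ : Fin n) = j := by apply Fin.ext; simp
          rw [h5]; exact hj
        · apply Fin.ext; simp
      · intro i hi
        have h6 : ((Fin.castLE hnm i : Fin (n+m)) : ℕ) < n := by simp [i.2]
        show x i t = y (Fin.castLE hnm i) t
        simp only [hy, dif_pos h6]
        have h7 : (⟨((Fin.castLE hnm i : Fin (n+m)) : ℕ), h6⟩ : Fin n) = i := by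
          apply Fin.ext; simp
        rw [h7]
  rcases Nat.lt_or_ge k1.1 k2.1 with h | h
  · exact hmain k1 k2 h heqk
  · have h2 : k2.1 < k1.1 := by
      rcases Nat.lt_or_ge k2.1 k1.1 with h3 | h3
      · exact h3
      · exact absurd (Fin.ext (le_antisymm h h3).symm) hne
    exact hmain k2 k1 h2 heqk.symm

lemma main_aux (r d q : ℕ) (hr : 0 < r) (hq : 0 < q) :
    ∀ n (x : Fin n → Fin d → ℤ), (∀ i j, |x i j| ≤ (r:ℤ)) → (∀ j, |∑ i, x i j| ≤ (q:ℤ)) →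
    ∃ S : Finset (Fin n), S.card ≤ (⌈(q : ℚ) / r⌉₊ + 2) * (2 * r * d + 1) ^ d ∧
      ∀ t, ∑ i ∈ S, x i t = ∑ i, x i t := by
  intro n
  induction n using Nat.strong_induction_on with
  | _ n ih =>
    intro x hx hw
    by_cases hn : n ≤ (⌈(q : ℚ) / r⌉₊ + 2) * (2 * r * d + 1) ^ d
    · refine ⟨Finset.univ, ?_, fun t => rfl⟩
      rw [Finset.card_univ, Fintype.card_fin]
      exact hn
    · push_neg at hn
      obtain ⟨U, hUne, hU0⟩ := zero_subset r d q n hr hq hn.le x hx hw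
      set T := Uᶜ with hT
      have hTcard : T.card < n := by
        rw [hT, Finset.card_compl, Fintype.card_fin]
        have h1 : 1 ≤ U.card := Finset.card_pos.2 hUne
        have h2 : U.card ≤ n := by
          have h5 := Finset.card_le_univ U
          rwa [Fintype.card_fin] at h5
        have h3 : 1 ≤ n := by
          have h4 : 1 ≤ (⌈(q : ℚ) / r⌉₊ + 2) * (2 * r * d + 1) ^ d :=
            Nat.one_le_iff_ne_zero.2 (by positivity)
          omega
        omega
      set e := T.orderIsoOfFin rfl with he
      set x' : Fin T.card → Fin d → ℤ := fun i => x (e i) with hx'def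
      have hsumT : ∀ t, ∑ i, x' i t = ∑ i ∈ T, x i t := by
        intro t
        rw [← Finset.sum_coe_sort T (fun i => x i t)]
        exact Equiv.sum_comp e.toEquiv (fun j => x j t)
      have hcompl : ∀ t, ∑ i ∈ T, x i t = ∑ i, x i t := by
        intro t
        have h3 := Finset.sum_add_sum_compl U (fun i => x i t)
        rw [hU0 t, zero_add] at h3
        rw [hT]
        exact h3
      have hinj : Function.Injective (fun i : Fin T.card => ((e i : T) : Fin n)) := by
        intro a b hab
        apply e.toEquiv.injective
        exact Subtype.val_injective hab
      obtain ⟨S', hS'card, hS'sum⟩ := ih T.card hTcard x' (fun i j => hx _ _)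
        (fun j => by rw [hsumT j, hcompl j]; exact hw j)
      refine ⟨S'.image (fun i => ((e i : T) : Fin n)), ?_, ?_⟩
      · rw [Finset.card_image_of_injective _ hinj]
        exact hS'card
      · intro t
        rw [Finset.sum_image (fun a _ b _ hab => hinj hab)]
        have h5 : ∑ i ∈ S', x ((e i : T) : Fin n) t = ∑ i ∈ S', x' i t :=
          Finset.sum_congr rfl (fun i _ => rfl)
        rw [h5, hS'sum t, hsumT t, hcompl t]

end SteinitzAux

theorem stmt_2 (r d q n : ℕ) (hr : 0 < r) (hd : 0 < d) (hq : 0 < q)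
    (hn : (⌈(q : ℚ) / r⌉₊ + 2) * (2 * r * d + 1) ^ d ≤ n)
    (x : Fin n → Fin d → ℤ)
    (hx : ∀ i j, |x i j| ≤ (r : ℤ))
    (hw : ∀ j, |∑ i, x i j| ≤ (q : ℤ)) :
    ∃ S : Finset (Fin n),
      S.card ≤ (⌈(q : ℚ) / r⌉₊ + 2) * (2 * r * d + 1) ^ d ∧
      ∑ i ∈ S, x i = ∑ i, x i := by
  obtain ⟨S, hcard, hsum⟩ := SteinitzAux.main_aux r d q hr hq n x hx hw
  refine ⟨S, hcard, ?_⟩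
  funext t
  rw [Finset.sum_apply, Finset.sum_apply]
  exact hsum t
end

section
/- For every positive integer n there exists a graph D on n vertices such that for every induced subgraph H of D and every integer t, the number of vertices of H having degree t in H is at most 3n/ln(n). (For n large enough, e.g. n ≥ 2.) -/
open Finset

open Finset

lemma harmonic_ge_log (m : ℕ) :
    Real.log (m + 1) ≤ ∑ i ∈ Finset.range m, (1 : ℝ) / (i + 1) := by
  induction m with
  | zero => simp
  | succ k ih =>
    rw [Finset.sum_range_succ]
    have hpos : (0:ℝ) < ((k:ℝ) + 2) / ((k:ℝ) + 1) := by positivity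
    have h1 : Real.log (((k:ℝ) + 2) / ((k:ℝ) + 1)) ≤ 1 / ((k:ℝ) + 1) := by
      have h0 := Real.log_le_sub_one_of_pos hpos
      have h2 : ((k:ℝ) + 2) / ((k:ℝ) + 1) - 1 = 1 / ((k:ℝ) + 1) := by
        field_simp
        ring
      linarith
    rw [Real.log_div (by positivity) (by positivity)] at h1
    push_cast
    have e : (k:ℝ) + 1 + 1 = (k:ℝ) + 2 := by ring
    rw [e]
    linarith

lemma natdiv_lb (M k : ℕ) (hk : 0 < k) : (M:ℝ)/k - 1 < ((M / k : ℕ) : ℝ) := by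
  have h := Nat.div_add_mod M k
  have hm : M % k < k := Nat.mod_lt _ hk
  have h' : (k:ℝ) * ((M/k : ℕ):ℝ) + ((M % k : ℕ):ℝ) = (M:ℝ) := by exact_mod_cast h
  have hm' : ((M % k : ℕ):ℝ) < (k:ℝ) := by exact_mod_cast hm
  have hk' : (0:ℝ) < k := by exact_mod_cast hk
  rw [div_sub_one (by positivity), div_lt_iff₀ hk']
  nlinarith

lemma total_ge (n : ℕ) (hn : 2 ≤ n) :
    n ≤ ∑ i ∈ Finset.range (⌊3 * (n:ℝ) / Real.log n⌋₊),
      (⌊3 * (n:ℝ) / Real.log n⌋₊) / (i + 1) := by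
  have hn1 : (1:ℝ) < n := by exact_mod_cast hn.trans_lt' one_lt_two
  set L := Real.log n with hLdef
  have hL0 : 0 < L := Real.log_pos hn1
  set M : ℕ := ⌊3 * (n:ℝ) / L⌋₊ with hMdef
  -- 2 * L ≤ n
  have hsq : Real.sqrt n ^ 2 = (n:ℝ) := Real.sq_sqrt (by positivity)
  have hsqlog : Real.log n = 2 * Real.log (Real.sqrt n) := by
    rw [Real.log_sqrt (by positivity)]; ring
  have hslog : Real.log (Real.sqrt n) ≤ Real.sqrt n - 1 :=
    Real.log_le_sub_one_of_pos (Real.sqrt_pos.2 (by positivity))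
  have h2L : 2 * L ≤ (n:ℝ) := by
    rw [hLdef, hsqlog]
    nlinarith [hsq, hslog, sq_nonneg (Real.sqrt n - 2)]
  have hnL : (2:ℝ) ≤ (n:ℝ)/L := (le_div_iff₀ hL0).2 (by linarith)
  have hMlb : 3 * (n:ℝ) / L - 1 < M := by
    have := Nat.lt_floor_add_one (3 * (n:ℝ) / L)
    linarith
  have hMge : (5/2) * ((n:ℝ)/L) ≤ (M:ℝ) := by
    have h3 : 3 * (n:ℝ) / L = 3 * ((n:ℝ)/L) := by ring
    rw [h3] at hMlb
    linarith
  have hM5 : (5:ℝ) ≤ M := by nlinarith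
  have hM0 : (0:ℝ) < M := by linarith
  -- log M lower bound
  have hlogM : L - Real.log L + Real.log (5/2) ≤ Real.log M := by
    have h1 : Real.log ((5/2) * ((n:ℝ)/L)) ≤ Real.log M :=
      Real.log_le_log (by positivity) hMge
    rw [Real.log_mul (by norm_num) (by positivity), Real.log_div (by positivity) hL0.ne'] at h1
    linarith
  have hlogL : Real.log L ≤ (3/5)*L - 1 + Real.log (5/3) := by
    have h0 := Real.log_le_sub_one_of_pos (show (0:ℝ) < (3/5) * L by positivity)
    rw [Real.log_mul (by norm_num) hL0.ne'] at h0
    have h35 : Real.log (3/5) = - Real.log (5/3) := by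
      rw [show (3:ℝ)/5 = ((5:ℝ)/3)⁻¹ by norm_num, Real.log_inv]
    linarith
  have hA : (2/5)*L ≤ Real.log M - 1 := by
    have hmono : Real.log (5/3) ≤ Real.log (5/2) :=
      Real.log_le_log (by norm_num) (by norm_num)
    linarith
  -- n ≤ M * (log M - 1)
  have hkey : (n:ℝ) ≤ M * (Real.log M - 1) := by
    have heq : (n:ℝ) = (5/2) * ((n:ℝ)/L) * ((2/5)*L) := by
      field_simp
    rw [heq]
    apply mul_le_mul hMge hA (by positivity) (le_of_lt hM0)
  -- sum bound
  have hsum : (n:ℝ) ≤ ∑ i ∈ Finset.range M, ((M/(i+1) : ℕ) : ℝ) := by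
    have hH : Real.log (M+1) ≤ ∑ i ∈ Finset.range M, (1:ℝ)/(i+1) := harmonic_ge_log M
    have hlog1 : Real.log M ≤ Real.log (M+1) := Real.log_le_log hM0 (by linarith)
    have hsplit : ∑ i ∈ Finset.range M, ((M:ℝ)/(i+1) - 1)
        = (M:ℝ) * (∑ i ∈ Finset.range M, (1:ℝ)/(i+1)) - M := by
      rw [Finset.sum_sub_distrib, Finset.mul_sum]
      simp [div_eq_mul_inv]
    have hterm : ∀ i ∈ Finset.range M, (M:ℝ)/(i+1) - 1 ≤ ((M/(i+1) : ℕ) : ℝ) := by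
      intro i _
      have := natdiv_lb M (i+1) (Nat.succ_pos i)
      push_cast at this ⊢
      linarith
    have h5 := Finset.sum_le_sum hterm
    rw [hsplit] at h5
    nlinarith [hH, hlog1, hkey, hM0]
  have : ((n:ℕ):ℝ) ≤ ((∑ i ∈ Finset.range M, M/(i+1) : ℕ) : ℝ) := by
    push_cast
    exact hsum
  exact_mod_cast this

open scoped Classical in
theorem stmt_6 (n : ℕ) (hn : 2 ≤ n) :
    ∃ D : SimpleGraph (Fin n), ∀ (s : Finset (Fin n)) (t : ℕ),
      ((s.filter (fun v => (s.filter (fun u => D.Adj v u)).card = t)).card : ℝ) ≤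
        3 * n / Real.log n := by
  have hn1 : (1:ℝ) < n := by exact_mod_cast hn.trans_lt' one_lt_two
  have hL0 : 0 < Real.log n := Real.log_pos hn1
  set M : ℕ := ⌊3 * (n:ℝ) / Real.log n⌋₊ with hMdef
  set c : ℕ → ℕ := fun j => ∑ i ∈ Finset.range j, M / (i+1) with hcdef
  have hcM : n ≤ c M := total_ge n hn
  have hcsucc : ∀ j, c (j+1) = c j + M / (j+1) := by
    intro j; simp only [hcdef, Finset.sum_range_succ]
  have hne : ∀ x : ℕ, x < n → {j | x < c (j+1)}.Nonempty := by
    intro x hx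
    refine ⟨M, ?_⟩
    have h1 : c M ≤ c (M+1) := by rw [hcsucc]; exact Nat.le_add_right _ _
    exact lt_of_lt_of_le (lt_of_lt_of_le hx hcM) h1
  set f : ℕ → ℕ := fun x => sInf {j | x < c (j+1)} with hfdef
  have hf_lt : ∀ x : ℕ, x < n → x < c (f x + 1) := fun x hx => Nat.sInf_mem (hne x hx)
  have hf_ge : ∀ x : ℕ, x < n → c (f x) ≤ x := by
    intro x hx
    rcases Nat.eq_zero_or_pos (f x) with h0 | h0
    · rw [h0]; simp [hcdef]
    · have hlt : f x - 1 < f x := Nat.sub_lt h0 one_pos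
      have hmem := Nat.notMem_of_lt_sInf (s := {j | x < c (j+1)}) hlt
      rw [Set.mem_setOf_eq, Nat.sub_add_cancel h0] at hmem
      exact not_lt.1 hmem
  -- fiber bound
  have hfiber : ∀ (s : Finset (Fin n)) (b : ℕ),
      (s.filter (fun v => f v.val = b)).card ≤ M / (b+1) := by
    intro s b
    have hmaps : ∀ v ∈ s.filter (fun v => f v.val = b),
        (fun v : Fin n => v.val) v ∈ Finset.Ico (c b) (c (b+1)) := by
      intro v hv
      rw [Finset.mem_filter] at hv
      rw [Finset.mem_Ico]
      constructor
      · rw [← hv.2]; exact hf_ge v.val v.isLt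
      · rw [← hv.2]; exact hf_lt v.val v.isLt
    have hinj : Set.InjOn (fun v : Fin n => v.val)
        ↑(s.filter (fun v => f v.val = b)) := by
      intro a _ b' _ h
      exact Fin.ext h
    have hc := Finset.card_le_card_of_injOn _ hmaps hinj
    rwa [Nat.card_Ico, hcsucc b, Nat.add_sub_cancel_left] at hc
  -- the graph
  set D : SimpleGraph (Fin n) := ⟨fun v u => v ≠ u ∧ f v.val = f u.val,
    ⟨fun v u h => ⟨h.1.symm, h.2.symm⟩⟩, ⟨fun v h => h.1 rfl⟩⟩ with hD
  have hAdj : ∀ v u : Fin n, D.Adj v u ↔ (v ≠ u ∧ f v.val = f u.val) :=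
    fun _ _ => Iff.rfl
  refine ⟨D, ?_⟩
  intro s t
  set T : Finset ℕ := ((s.image (fun v => f v.val)).filter
      (fun b => (s.filter (fun v => f v.val = b)).card = t + 1)) with hT
  have hstep1 : s.filter (fun v => (@Finset.filter _ (fun u => D.Adj v u)
        (fun a => Classical.propDecidable (D.Adj v a)) s).card = t)
      = s.filter (fun v => f v.val ∈ T) := by
    apply Finset.filter_congr
    intro v hv
    have hinner : (@Finset.filter _ (fun u => D.Adj v u)
          (fun a => Classical.propDecidable (D.Adj v a)) s)
        = (s.filter (fun u => f u.val = f v.val)).erase v := by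
      ext u
      simp only [Finset.mem_erase, Finset.mem_filter, hAdj]
      constructor
      · rintro ⟨hu, hne', heq⟩; exact ⟨fun h => hne' h.symm, hu, heq.symm⟩
      · rintro ⟨hne', hu, heq⟩; exact ⟨hu, fun h => hne' h.symm, heq.symm⟩
    rw [hinner, Finset.card_erase_of_mem (by
      rw [Finset.mem_filter]; exact ⟨hv, rfl⟩)]
    have hpos : 1 ≤ (s.filter (fun u => f u.val = f v.val)).card := by
      rw [Nat.one_le_iff_ne_zero, ← Nat.pos_iff_ne_zero, Finset.card_pos]
      exact ⟨v, by rw [Finset.mem_filter]; exact ⟨hv, rfl⟩⟩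
    constructor
    · intro h
      rw [hT, Finset.mem_filter]
      refine ⟨Finset.mem_image_of_mem _ hv, ?_⟩
      omega
    · intro h
      rw [hT, Finset.mem_filter] at h
      omega
  have hdisj : ∀ b1 ∈ T, ∀ b2 ∈ T, b1 ≠ b2 →
      Disjoint (s.filter (fun v => f v.val = b1)) (s.filter (fun v => f v.val = b2)) := by
    intro b1 _ b2 _ hne'
    rw [Finset.disjoint_left]
    intro v hv1 hv2
    rw [Finset.mem_filter] at hv1 hv2
    exact hne' (hv1.2 ▸ hv2.2)
  have hstep2 : (s.filter (fun v => f v.val ∈ T))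
      = T.biUnion (fun b => s.filter (fun v => f v.val = b)) := by
    ext v
    simp only [Finset.mem_biUnion, Finset.mem_filter]
    constructor
    · rintro ⟨hv, hfv⟩; exact ⟨f v.val, hfv, hv, rfl⟩
    · rintro ⟨b, hb, hv, hfv⟩; exact ⟨hv, hfv ▸ hb⟩
  have hcard : (s.filter (fun v => f v.val ∈ T)).card = T.card * (t+1) := by
    rw [hstep2, Finset.card_biUnion hdisj]
    have : ∀ b ∈ T, (s.filter (fun v => f v.val = b)).card = t + 1 := by
      intro b hb
      rw [hT, Finset.mem_filter] at hb
      exact hb.2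
    rw [Finset.sum_congr rfl this, Finset.sum_const, smul_eq_mul]
  have hTsub : T ⊆ Finset.range (M/(t+1)) := by
    intro b hb
    rw [hT, Finset.mem_filter] at hb
    have h1 : t + 1 ≤ M/(b+1) := hb.2 ▸ hfiber s b
    have h2 : (t+1)*(b+1) ≤ M := (Nat.le_div_iff_mul_le (Nat.succ_pos b)).1 h1
    have h3 : b + 1 ≤ M/(t+1) :=
      (Nat.le_div_iff_mul_le (Nat.succ_pos t)).2 (by nlinarith)
    exact Finset.mem_range.2 (lt_of_lt_of_le (Nat.lt_succ_self b) h3)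
  have hfinal : (s.filter (fun v => f v.val ∈ T)).card ≤ M := by
    rw [hcard]
    calc T.card * (t+1) ≤ (M/(t+1)) * (t+1) := by
          apply Nat.mul_le_mul_right
          calc T.card ≤ (Finset.range (M/(t+1))).card := Finset.card_le_card hTsub
            _ = M/(t+1) := Finset.card_range _
      _ ≤ M := Nat.div_mul_le_self _ _
  show ((s.filter (fun v => (@Finset.filter _ (fun u => D.Adj v u)
      (fun a => Classical.propDecidable (D.Adj v a)) s).card = t)).card : ℝ) ≤ 3 * n / Real.log n
  rw [hstep1]
  calc ((s.filter (fun v => f v.val ∈ T)).card : ℝ) ≤ (M : ℝ) := by exact_mod_cast hfinal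
    _ ≤ 3 * n / Real.log n := Nat.floor_le (by positivity)
end

section
/- Let G be a graph and x, y, z vertices with deg(x) < deg(y) = deg(z), such that (x,y) ∈ E iff (x,z) ∈ E, and if (y,z) ∈ E then {x,y,z} induces a triangle. Then one can delete at most 2 vertices (none of them x, y, or z) so that in the resulting graph deg(y) and deg(z) each decrease by exactly 1 while deg(x) is unchanged. -/
open Finset

lemma aux_exists {V : Type*} [Fintype V] [DecidableEq V]
    (G : SimpleGraph V) [DecidableRel G.Adj] (x y : V)
    (h : G.degree x < G.degree y) :
    ∃ a, G.Adj y a ∧ ¬ G.Adj x a ∧ a ≠ x := by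
  by_contra hc
  push_neg at hc
  by_cases hx : G.Adj y x
  · have hsub : G.neighborFinset y ⊆ (G.neighborFinset x ∪ {x}).erase y := by
      intro a ha
      rw [SimpleGraph.mem_neighborFinset] at ha
      rw [Finset.mem_erase]
      refine ⟨fun hay => G.irrefl (hay ▸ ha), ?_⟩
      by_cases hxa : G.Adj x a
      · simp [SimpleGraph.mem_neighborFinset, hxa]
      · simp [hc a ha hxa]
    have hy : y ∈ G.neighborFinset x ∪ {x} := by
      simp [SimpleGraph.mem_neighborFinset, hx.symm]
    have h1 := Finset.card_le_card hsub
    rw [Finset.card_erase_of_mem hy] at h1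
    have h2 : (G.neighborFinset x ∪ {x}).card ≤ G.degree x + 1 := by
      calc (G.neighborFinset x ∪ {x}).card ≤ (G.neighborFinset x).card + ({x} : Finset V).card :=
            Finset.card_union_le _ _
        _ = G.degree x + 1 := by rw [SimpleGraph.card_neighborFinset_eq_degree, Finset.card_singleton]
    have hcy : (G.neighborFinset y).card = G.degree y := G.card_neighborFinset_eq_degree y
    omega
  · have hsub : G.neighborFinset y ⊆ G.neighborFinset x := by
      intro a ha
      rw [SimpleGraph.mem_neighborFinset] at ha ⊢
      by_contra hxa
      exact hx ((hc a ha hxa) ▸ ha)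
    have := Finset.card_le_card hsub
    rw [SimpleGraph.card_neighborFinset_eq_degree, SimpleGraph.card_neighborFinset_eq_degree] at this
    omega

lemma filter_compl_eq {V : Type*} [Fintype V] [DecidableEq V]
    (G : SimpleGraph V) [DecidableRel G.Adj] (v : V) (X : Finset V) :
    (Xᶜ.filter (fun u => G.Adj v u)) = G.neighborFinset v \ X := by
  ext u
  simp [SimpleGraph.mem_neighborFinset, and_comm]

theorem stmt_12 {V : Type*} [Fintype V] [DecidableEq V]
    (G : SimpleGraph V) [DecidableRel G.Adj]
    (x y z : V) (hxy : x ≠ y) (hxz : x ≠ z) (hyz : y ≠ z)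
    (hdeg : G.degree x < G.degree y) (hdeg' : G.degree y = G.degree z)
    (hiff : G.Adj x y ↔ G.Adj x z)
    (htri : G.Adj y z → G.Adj x y ∧ G.Adj x z) :
    ∃ X : Finset V, X.card ≤ 2 ∧ x ∉ X ∧ y ∉ X ∧ z ∉ X ∧
      (Xᶜ.filter (fun u => G.Adj y u)).card = G.degree y - 1 ∧
      (Xᶜ.filter (fun u => G.Adj z u)).card = G.degree z - 1 ∧
      (Xᶜ.filter (fun u => G.Adj x u)).card = G.degree x := by
  have hdegz : G.degree x < G.degree z := hdeg' ▸ hdeg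
  by_cases hw : ∃ w, G.Adj y w ∧ G.Adj z w ∧ ¬ G.Adj x w ∧ w ≠ x
  · obtain ⟨w, hyw, hzw, hxw, hwx⟩ := hw
    refine ⟨{w}, by simp, by simp [Ne.symm hwx], by simp only [Finset.mem_singleton]; exact fun h => G.irrefl (h ▸ hyw),
      by simp only [Finset.mem_singleton]; exact fun h => G.irrefl (h ▸ hzw), ?_, ?_, ?_⟩
    · rw [filter_compl_eq, Finset.card_sdiff_of_subset (by simp [SimpleGraph.mem_neighborFinset, hyw]),
        SimpleGraph.card_neighborFinset_eq_degree, Finset.card_singleton]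
    · rw [filter_compl_eq, Finset.card_sdiff_of_subset (by simp [SimpleGraph.mem_neighborFinset, hzw]),
        SimpleGraph.card_neighborFinset_eq_degree, Finset.card_singleton]
    · rw [filter_compl_eq, Finset.sdiff_eq_self_of_disjoint (by
        simp [Finset.disjoint_singleton_right, SimpleGraph.mem_neighborFinset, hxw]),
        SimpleGraph.card_neighborFinset_eq_degree]
  · push_neg at hw
    obtain ⟨a, hya, hxa, hax⟩ := aux_exists G x y hdeg
    obtain ⟨b, hzb, hxb, hbx⟩ := aux_exists G x z hdegz
    have hza : ¬ G.Adj z a := fun h => hax (hw a hya h hxa)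
    have hyb : ¬ G.Adj y b := fun h => hbx (hw b h hzb hxb)
    have hab : a ≠ b := fun h => hyb (h ▸ hya)
    have haz : a ≠ z := by
      rintro rfl
      exact hxa (htri hya).2
    have hby : b ≠ y := by
      rintro rfl
      exact hxb ((htri hzb.symm).1)
    have hay : a ≠ y := fun h => G.irrefl (h ▸ hya)
    have hbz : b ≠ z := fun h => G.irrefl (h ▸ hzb)
    refine ⟨{a, b}, by rw [Finset.card_insert_of_notMem (by simp [hab])]; simp,
      by simp [Ne.symm hax, Ne.symm hbx], by simp [Ne.symm hay, Ne.symm hby],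
      by simp [Ne.symm haz, Ne.symm hbz], ?_, ?_, ?_⟩
    · rw [filter_compl_eq]
      have : G.neighborFinset y ∩ {a, b} = {a} := by
        ext u
        simp only [Finset.mem_inter, SimpleGraph.mem_neighborFinset, Finset.mem_insert,
          Finset.mem_singleton]
        constructor
        · rintro ⟨hu, rfl | rfl⟩
          · rfl
          · exact absurd hu hyb
        · rintro rfl; exact ⟨hya, Or.inl rfl⟩
      have hkey := Finset.card_sdiff_add_card_inter (G.neighborFinset y) ({a, b} : Finset V)
      rw [this, Finset.card_singleton, SimpleGraph.card_neighborFinset_eq_degree] at hkey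
      omega
    · rw [filter_compl_eq]
      have : G.neighborFinset z ∩ {a, b} = {b} := by
        ext u
        simp only [Finset.mem_inter, SimpleGraph.mem_neighborFinset, Finset.mem_insert,
          Finset.mem_singleton]
        constructor
        · rintro ⟨hu, rfl | rfl⟩
          · exact absurd hu hza
          · rfl
        · rintro rfl; exact ⟨hzb, Or.inr rfl⟩
      have hkey := Finset.card_sdiff_add_card_inter (G.neighborFinset z) ({a, b} : Finset V)
      rw [this, Finset.card_singleton, SimpleGraph.card_neighborFinset_eq_degree] at hkey
      omega
    · rw [filter_compl_eq, Finset.sdiff_eq_self_of_disjoint (by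
        simp [Finset.disjoint_insert_right, Finset.disjoint_singleton_right,
          SimpleGraph.mem_neighborFinset, hxa, hxb]),
        SimpleGraph.card_neighborFinset_eq_degree]
end

section
/- For all positive integers k and r, there exists a constant C = C(k,r) such that every complete graph on n vertices with edge weights in {0,...,r} contains an induced complete subgraph on at least n − C vertices in which at least min{k, n−C} vertices have the same weighted degree. -/
lemma chunk_extract {V : Type} [DecidableEq V] (r : ℕ) (hr : 0 < r) (g : V → ℤ) (A : Finset V)
    (hb : ∀ x ∈ A, |g x| ≤ (r:ℤ))
    (hP : (∃ x ∈ A, g x = 0) ∨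
      (r^2 ≤ (A.filter (fun x => 0 < g x)).card ∧ r^2 ≤ (A.filter (fun x => g x < 0)).card)) :
    ∃ c ⊆ A, c.Nonempty ∧ c.card ≤ 2*r ∧ ∑ x ∈ c, g x = 0 := by
  rcases hP with ⟨x, hx, hgx⟩ | ⟨hpos, hneg⟩
  · exact ⟨{x}, Finset.singleton_subset_iff.mpr hx, Finset.singleton_nonempty x,
      by rw [Finset.card_singleton]; omega, by simp [hgx]⟩
  · -- find abundant positive value p
    have hmapsP : ∀ x ∈ A.filter (fun x => 0 < g x), g x ∈ Finset.Icc (1:ℤ) r := by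
      intro x hx
      rw [Finset.mem_filter] at hx
      have := hb x hx.1
      rw [Finset.mem_Icc]
      constructor
      · omega
      · rw [abs_le] at this; exact this.2
    have hmapsN : ∀ x ∈ A.filter (fun x => g x < 0), g x ∈ Finset.Icc (-(r:ℤ)) (-1) := by
      intro x hx
      rw [Finset.mem_filter] at hx
      have := hb x hx.1
      rw [abs_le] at this
      rw [Finset.mem_Icc]
      omega
    have hcardIcc : (Finset.Icc (1:ℤ) r).card = r := by
      rw [Int.card_Icc]
      omega
    have hcardIcc' : (Finset.Icc (-(r:ℤ)) (-1)).card = r := by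
      rw [Int.card_Icc]
      omega
    have hPpig : ∃ p ∈ Finset.Icc (1:ℤ) r,
        r - 1 < ((A.filter (fun x => 0 < g x)).filter (fun x => g x = p)).card := by
      apply Finset.exists_lt_card_fiber_of_mul_lt_card_of_maps_to hmapsP
      rw [hcardIcc]
      have e1 : r^2 = r*r := pow_two r
      have e2 : r*(r-1) < r*r := Nat.mul_lt_mul_of_pos_left (by omega) hr
      linarith
    have hNpig : ∃ q ∈ Finset.Icc (-(r:ℤ)) (-1),
        r - 1 < ((A.filter (fun x => g x < 0)).filter (fun x => g x = q)).card := by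
      apply Finset.exists_lt_card_fiber_of_mul_lt_card_of_maps_to hmapsN
      rw [hcardIcc']
      have e1 : r^2 = r*r := pow_two r
      have e2 : r*(r-1) < r*r := Nat.mul_lt_mul_of_pos_left (by omega) hr
      linarith
    obtain ⟨p, hpIcc, hpcard⟩ := hPpig
    obtain ⟨q, hqIcc, hqcard⟩ := hNpig
    rw [Finset.mem_Icc] at hpIcc hqIcc
    -- take (-q).toNat elements of fiber p, p.toNat elements of fiber q
    obtain ⟨t₁, ht₁sub, ht₁card⟩ := Finset.exists_subset_card_eq
      (s := (A.filter (fun x => 0 < g x)).filter (fun x => g x = p)) (n := (-q).toNat) (by omega)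
    obtain ⟨t₂, ht₂sub, ht₂card⟩ := Finset.exists_subset_card_eq
      (s := (A.filter (fun x => g x < 0)).filter (fun x => g x = q)) (n := p.toNat) (by omega)
    have ht₁val : ∀ x ∈ t₁, g x = p := fun x hx => (Finset.mem_filter.mp (ht₁sub hx)).2
    have ht₂val : ∀ x ∈ t₂, g x = q := fun x hx => (Finset.mem_filter.mp (ht₂sub hx)).2
    have hdisj : Disjoint t₁ t₂ := by
      rw [Finset.disjoint_left]
      intro x hx1 hx2
      have := ht₁val x hx1
      have := ht₂val x hx2
      omega
    refine ⟨t₁ ∪ t₂, ?_, ?_, ?_, ?_⟩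
    · apply Finset.union_subset
      · exact ht₁sub.trans ((Finset.filter_subset _ _).trans (Finset.filter_subset _ _))
      · exact ht₂sub.trans ((Finset.filter_subset _ _).trans (Finset.filter_subset _ _))
    · have : 0 < t₁.card := by rw [ht₁card]; omega
      have := Finset.card_pos.mp this
      exact this.mono Finset.subset_union_left
    · rw [Finset.card_union_of_disjoint hdisj, ht₁card, ht₂card]
      omega
    · rw [Finset.sum_union hdisj]
      rw [Finset.sum_congr rfl ht₁val, Finset.sum_congr rfl ht₂val]
      rw [Finset.sum_const, Finset.sum_const, ht₁card, ht₂card]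
      have h1 : ((-q).toNat : ℤ) = -q := Int.toNat_of_nonneg (by omega)
      have h2 : ((p).toNat : ℤ) = p := Int.toNat_of_nonneg (by omega)
      rw [nsmul_eq_mul, nsmul_eq_mul, h1, h2]
      ring

lemma stop_count {V : Type} [DecidableEq V] (r B : ℕ) (g : V → ℤ) (R : Finset V)
    (hb : ∀ x ∈ R, |g x| ≤ (r:ℤ))
    (hnz : ∀ x ∈ R, g x ≠ 0)
    (hsmall : (R.filter (fun x => 0 < g x)).card < r^2 ∨ (R.filter (fun x => g x < 0)).card < r^2)
    (hsum : |∑ x ∈ R, g x| ≤ (B:ℤ)) :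
    R.card ≤ r^2 + r^3 + B := by
  set Rp := R.filter (fun x => 0 < g x) with hRp
  set Rn := R.filter (fun x => ¬ 0 < g x) with hRn
  have hRnneg : ∀ x ∈ Rn, g x < 0 := by
    intro x hx
    rw [hRn, Finset.mem_filter] at hx
    have := hnz x hx.1
    omega
  have hcards : Rp.card + Rn.card = R.card := Finset.card_filter_add_card_filter_not _
  have hsplit : ∑ x ∈ Rp, g x + ∑ x ∈ Rn, g x = ∑ x ∈ R, g x :=
    Finset.sum_filter_add_sum_filter_not R _ g
  have hRpub : ∑ x ∈ Rp, g x ≤ (Rp.card : ℤ) * r := by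
    have h := Finset.sum_le_card_nsmul Rp g (r:ℤ)
      (fun x hx => (abs_le.mp (hb x (Finset.mem_of_mem_filter x hx))).2)
    rwa [nsmul_eq_mul] at h
  have hRplb : (Rp.card : ℤ) ≤ ∑ x ∈ Rp, g x := by
    have h := Finset.card_nsmul_le_sum Rp g (1:ℤ)
      (fun x hx => by have := (Finset.mem_filter.mp hx).2; omega)
    rw [nsmul_eq_mul, mul_one] at h
    exact h
  have hRnub : ∑ x ∈ Rn, g x ≤ -(Rn.card : ℤ) := by
    have h := Finset.sum_le_card_nsmul Rn g (-1:ℤ)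
      (fun x hx => by have := hRnneg x hx; omega)
    rw [nsmul_eq_mul, mul_neg_one] at h
    exact h
  have hRnlb : -((Rn.card : ℤ) * r) ≤ ∑ x ∈ Rn, g x := by
    have h := Finset.card_nsmul_le_sum Rn g (-(r:ℤ))
      (fun x hx => by have := (abs_le.mp (hb x (Finset.mem_of_mem_filter x hx))).1; omega)
    rw [nsmul_eq_mul, mul_neg] at h
    exact h
  rw [abs_le] at hsum
  have hr3 : ((r:ℤ))^3 = (r:ℤ)^2 * r := by ring
  have hfilt : R.filter (fun x => g x < 0) = Rn := by
    apply Finset.filter_congr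
    intro x hx
    have := hnz x hx
    constructor
    · intro h; omega
    · intro h; omega
  have hrz : (0:ℤ) ≤ r := by positivity
  rcases hsmall with hs | hs
  · have hcp : (Rp.card:ℤ) ≤ ((r:ℤ))^2 := by exact_mod_cast hs.le
    have h1 : (Rn.card : ℤ) ≤ (Rp.card:ℤ) * r + B := by
      linarith [hRpub, hRnub, hsplit, hsum.1]
    have h2 : (Rp.card:ℤ) * r ≤ ((r:ℤ))^2 * r := by nlinarith
    have hc2 : ((Rp.card:ℤ)) + Rn.card = R.card := by exact_mod_cast hcards
    have h3 : (R.card : ℤ) ≤ (r:ℤ)^2 + (r:ℤ)^3 + B := by linarith [hr3]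
    exact_mod_cast h3
  · rw [hfilt] at hs
    have hcn : (Rn.card:ℤ) ≤ ((r:ℤ))^2 := by exact_mod_cast hs.le
    have h1 : (Rp.card : ℤ) ≤ (Rn.card:ℤ) * r + B := by
      linarith [hRplb, hRnlb, hsplit, hsum.2]
    have h2 : (Rn.card:ℤ) * r ≤ ((r:ℤ))^2 * r := by nlinarith
    have hc2 : ((Rp.card:ℤ)) + Rn.card = R.card := by exact_mod_cast hcards
    have h3 : (R.card : ℤ) ≤ (r:ℤ)^2 + (r:ℤ)^3 + B := by linarith [hr3]
    exact_mod_cast h3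

lemma decomp {V : Type} [DecidableEq V] (r : ℕ) (hr : 0 < r) (g : V → ℤ) :
    ∀ (n : ℕ) (A : Finset V), A.card ≤ n → (∀ x ∈ A, |g x| ≤ (r:ℤ)) →
    ∃ (R : Finset V) (C : Finset (Finset V)),
      R ⊆ A ∧
      (∀ c ∈ C, c ⊆ A ∧ c.Nonempty ∧ c.card ≤ 2*r ∧ ∑ x ∈ c, g x = 0) ∧
      (C : Set (Finset V)).PairwiseDisjoint id ∧
      Disjoint R (C.biUnion id) ∧
      A = R ∪ C.biUnion id ∧
      (∀ x ∈ R, g x ≠ 0) ∧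
      ((R.filter (fun x => 0 < g x)).card < r^2 ∨ (R.filter (fun x => g x < 0)).card < r^2) := by
  intro n
  induction n with
  | zero =>
    intro A hA hb
    have : A = ∅ := Finset.card_eq_zero.mp (by omega)
    subst this
    refine ⟨∅, ∅, by simp, by simp, by simp, by simp, by simp, by simp, Or.inl ?_⟩
    simp
    positivity
  | succ n ih =>
    intro A hA hb
    by_cases hP : (∃ x ∈ A, g x = 0) ∨
        (r^2 ≤ (A.filter (fun x => 0 < g x)).card ∧ r^2 ≤ (A.filter (fun x => g x < 0)).card)
    · obtain ⟨c, hcA, hcne, hccard, hcsum⟩ := chunk_extract r hr g A hb hP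
      have hssub : A \ c ⊂ A := by
        apply Finset.sdiff_ssubset hcA hcne
      have hcard' : (A \ c).card ≤ n := by
        have h1 := Finset.card_lt_card hssub
        omega
      obtain ⟨R, C, hRsub, hC, hCdisj, hRdisj, hunion, hstop⟩ :=
        ih (A \ c) hcard' (fun x hx => hb x (Finset.mem_sdiff.mp hx).1)
      have hcnotC : c ∉ C := by
        intro hc
        have h1 := (hC c hc).1
        have h2 : c ⊆ A \ c := h1
        obtain ⟨x, hx⟩ := hcne
        have := Finset.mem_sdiff.mp (h2 hx)
        exact this.2 hx
      refine ⟨R, insert c C, ?_, ?_, ?_, ?_, ?_, hstop.1, hstop.2⟩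
      · exact hRsub.trans (Finset.sdiff_subset)
      · intro c' hc'
        rcases Finset.mem_insert.mp hc' with rfl | hc'
        · exact ⟨hcA, hcne, hccard, hcsum⟩
        · have h := hC c' hc'
          exact ⟨h.1.trans Finset.sdiff_subset, h.2.1, h.2.2.1, h.2.2.2⟩
      · rw [Finset.coe_insert]
        apply Set.PairwiseDisjoint.insert hCdisj
        intro c' hc' _
        have h1 : c' ⊆ A \ c := (hC c' hc').1
        simp only [id]
        rw [Finset.disjoint_right]
        intro x hx
        exact fun hxc => (Finset.mem_sdiff.mp (h1 hx)).2 hxc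
      · rw [Finset.biUnion_insert]
        apply Finset.disjoint_union_right.mpr
        constructor
        · rw [Finset.disjoint_right]
          intro x hx
          exact fun hxR => (Finset.mem_sdiff.mp (hRsub hxR)).2 hx
        · exact hRdisj
      · rw [Finset.biUnion_insert]
        have h1 : A = c ∪ (A \ c) := by
          rw [Finset.union_sdiff_of_subset hcA]
        rw [h1]
        conv_lhs => rw [hunion]
        rw [Finset.union_comm c _, Finset.union_assoc, Finset.union_comm _ c]
        rfl
    · push_neg at hP
      refine ⟨A, ∅, Finset.Subset.refl A, by simp, by simp, by simp, by simp, hP.1, ?_⟩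
      rcases Nat.lt_or_ge (A.filter (fun x => 0 < g x)).card (r^2) with h | h
      · exact Or.inl h
      · exact Or.inr (hP.2 h)
theorem lemZ : ∀ (d r B : ℕ), 0 < r → ∃ G : ℕ, ∀ (V : Type) (_ : DecidableEq V)
    (A : Finset V) (φ : V → Fin d → ℤ),
    (∀ x ∈ A, (∀ j, |φ x j| ≤ (r:ℤ)) ∧ φ x ≠ 0) →
    (∀ j, |∑ x ∈ A, φ x j| ≤ (B:ℤ)) →
    G < A.card →
    ∃ Z ⊆ A, Z.Nonempty ∧ ∀ j, ∑ x ∈ Z, φ x j = 0 := by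
  intro d
  induction d with
  | zero =>
    intro r B _
    refine ⟨0, fun V _ A φ hφ _ hcard => ?_⟩
    obtain ⟨x, hx⟩ := Finset.card_pos.mp hcard
    exact absurd (funext (fun j => j.elim0) : φ x = 0) (hφ x hx).2
  | succ d ih =>
    intro r B hr
    obtain ⟨G', hG'⟩ := ih (2*r*r) (B + r*(r^2 + r^3 + B)) (by positivity)
    refine ⟨(r^2 + r^3 + B) + 2*r*(G'+1), ?_⟩
    intro V dV A φ hφ hsum hcard
    set g : V → ℤ := fun x => φ x 0 with hg
    obtain ⟨R, C, hRsub, hC, hCdisj, hRdisj, hunion, hRnz, hRsmall⟩ :=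
      decomp r hr g A.card A (le_refl _) (fun x hx => (hφ x hx).1 0)
    have hCsub : C.biUnion id ⊆ A := by
      rw [hunion]; exact Finset.subset_union_right
    -- sum over R of g equals sum over A of g
    have hsumRA : ∑ x ∈ R, g x = ∑ x ∈ A, g x := by
      conv_rhs => rw [hunion]
      rw [Finset.sum_union hRdisj, Finset.sum_biUnion hCdisj]
      simp only [id_eq]
      have : ∀ c ∈ C, ∑ x ∈ c, g x = 0 := fun c hc => (hC c hc).2.2.2
      rw [Finset.sum_congr rfl this]
      simp
    have hRcard : R.card ≤ r^2 + r^3 + B := by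
      apply stop_count r B g R (fun x hx => (hφ x (hRsub hx)).1 0) hRnz hRsmall
      rw [hsumRA]
      exact hsum 0
    by_cases hzc : ∃ c ∈ C, ∀ j, ∑ x ∈ c, φ x j = 0
    · obtain ⟨c, hcC, hcz⟩ := hzc
      exact ⟨c, (hC c hcC).1, (hC c hcC).2.1, hcz⟩
    · push_neg at hzc
      set ψ : Finset V → Fin d → ℤ := fun c j => ∑ x ∈ c, φ x j.succ with hψ
      have hψbound : ∀ c ∈ C, (∀ j, |ψ c j| ≤ ((2*r*r : ℕ):ℤ)) ∧ ψ c ≠ 0 := by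
        intro c hcC
        obtain ⟨hcA, hcne, hccard, hcsum⟩ := hC c hcC
        constructor
        · intro j
          have h6 := Finset.abs_sum_le_sum_abs (fun x => φ x j.succ) c
          have h7 := Finset.sum_le_card_nsmul c (fun x => |φ x j.succ|) (r:ℤ)
            (fun x hx => (hφ x (hcA hx)).1 j.succ)
          rw [nsmul_eq_mul] at h7
          have h8 : (c.card:ℤ)*r ≤ ((2*r*r:ℕ):ℤ) := by
            have h9 : (c.card:ℤ) ≤ ((2*r:ℕ):ℤ) := by exact_mod_cast hccard
            have hrz : (0:ℤ) ≤ r := by positivity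
            push_cast at h9 ⊢
            nlinarith
          calc |ψ c j| ≤ ∑ x ∈ c, |φ x j.succ| := h6
            _ ≤ (c.card:ℤ)*r := h7
            _ ≤ _ := h8
        · obtain ⟨j₀, hj₀⟩ := hzc c hcC
          have hj₀ne : j₀ ≠ 0 := by
            intro h
            rw [h] at hj₀
            exact hj₀ hcsum
          obtain ⟨j₁, hj₁⟩ := Fin.exists_succ_eq_of_ne_zero hj₀ne
          intro hzero
          apply hj₀
          rw [← hj₁]
          have := congrFun hzero j₁
          exact this
      have hψsum : ∀ j, |∑ c ∈ C, ψ c j| ≤ ((B + r*(r^2 + r^3 + B) : ℕ):ℤ) := by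
        intro j
        have h1 : ∑ c ∈ C, ψ c j = ∑ x ∈ C.biUnion id, φ x j.succ := by
          rw [Finset.sum_biUnion hCdisj]
          simp only [id_eq]
          rfl
        have h2 : ∑ x ∈ A, φ x j.succ = ∑ x ∈ R, φ x j.succ + ∑ x ∈ C.biUnion id, φ x j.succ := by
          conv_lhs => rw [hunion]
          rw [Finset.sum_union hRdisj]
        have h3 : |∑ x ∈ R, φ x j.succ| ≤ (R.card : ℤ) * r := by
          calc |∑ x ∈ R, φ x j.succ| ≤ ∑ x ∈ R, |φ x j.succ| := Finset.abs_sum_le_sum_abs _ _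
            _ ≤ R.card • (r:ℤ) := Finset.sum_le_card_nsmul _ _ _
                (fun x hx => (hφ x (hRsub hx)).1 j.succ)
            _ = (R.card : ℤ) * r := by rw [nsmul_eq_mul]
        have h4 := hsum j.succ
        rw [h1]
        rw [abs_le] at h4 h3 ⊢
        have h5 : (R.card : ℤ) * r ≤ ((r^2 + r^3 + B : ℕ):ℤ) * r := by
          have : (R.card : ℤ) ≤ ((r^2 + r^3 + B : ℕ):ℤ) := by exact_mod_cast hRcard
          have hrz : (0:ℤ) ≤ r := by positivity
          nlinarith
        push_cast at h5 ⊢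
        constructor <;> linarith
      have hCcard : G' < C.card := by
        have h1 : A.card = R.card + (C.biUnion id).card := by
          conv_lhs => rw [hunion]
          rw [Finset.card_union_of_disjoint hRdisj]
        have h2 : (C.biUnion id).card = ∑ c ∈ C, c.card := by
          rw [Finset.card_biUnion (fun c hc c' hc' hne => hCdisj hc hc' hne)]
          simp only [id_eq]
        have h3 : ∑ c ∈ C, c.card ≤ C.card * (2*r) := by
          have := Finset.sum_le_card_nsmul C (fun c => c.card) (2*r)
            (fun c hc => (hC c hc).2.2.1)
          rwa [smul_eq_mul] at this
        have h4 : (r^2 + r^3 + B) + 2*r*(G'+1) < (r^2+r^3+B) + C.card * (2*r) := by omega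
        have h5 : 2*r*(G'+1) < C.card * (2*r) := by omega
        rw [mul_comm (C.card) (2*r)] at h5
        have := Nat.lt_of_mul_lt_mul_left h5
        omega
      obtain ⟨Z', hZ'sub, hZ'ne, hZ'sum⟩ :=
        hG' (Finset V) inferInstance C ψ hψbound hψsum hCcard
      refine ⟨Z'.biUnion id, ?_, ?_, ?_⟩
      · apply Finset.biUnion_subset.mpr
        intro c hc
        exact (hC c (hZ'sub hc)).1
      · obtain ⟨c, hc⟩ := hZ'ne
        obtain ⟨x, hx⟩ := (hC c (hZ'sub hc)).2.1
        exact ⟨x, Finset.mem_biUnion.mpr ⟨c, hc, hx⟩⟩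
      · intro j
        have hdisj' : (Z' : Set (Finset V)).PairwiseDisjoint id :=
          hCdisj.subset (by exact_mod_cast hZ'sub)
        rw [Finset.sum_biUnion hdisj']
        simp only [id_eq]
        rcases Fin.eq_zero_or_eq_succ j with rfl | ⟨j', rfl⟩
        · have : ∀ c ∈ Z', ∑ x ∈ c, φ x 0 = 0 := fun c hc => (hC c (hZ'sub hc)).2.2.2
          rw [Finset.sum_congr rfl this]
          simp
        · exact hZ'sum j'
theorem lemE (d r B : ℕ) (hr : 0 < r) : ∃ G : ℕ, ∀ (V : Type) (_ : DecidableEq V)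
    (A : Finset V) (φ : V → Fin d → ℤ),
    (∀ x ∈ A, ∀ j, |φ x j| ≤ (r:ℤ)) →
    (∀ j, |∑ x ∈ A, φ x j| ≤ (B:ℤ)) →
    ∃ X ⊆ A, X.card ≤ G ∧ ∀ j, ∑ x ∈ X, φ x j = ∑ x ∈ A, φ x j := by
  obtain ⟨G, hG⟩ := lemZ d r B hr
  refine ⟨G, ?_⟩
  have inner : ∀ (V : Type) (dV : DecidableEq V) (n : ℕ) (A : Finset V) (φ : V → Fin d → ℤ),
      A.card ≤ n →
      (∀ x ∈ A, (∀ j, |φ x j| ≤ (r:ℤ)) ∧ φ x ≠ 0) →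
      (∀ j, |∑ x ∈ A, φ x j| ≤ (B:ℤ)) →
      ∃ X ⊆ A, X.card ≤ G ∧ ∀ j, ∑ x ∈ X, φ x j = ∑ x ∈ A, φ x j := by
    intro V dV n
    induction n with
    | zero =>
      intro A φ hA hφ hsum
      exact ⟨A, Finset.Subset.refl A, by omega, fun j => rfl⟩
    | succ n ih =>
      intro A φ hA hφ hsum
      by_cases hle : A.card ≤ G
      · exact ⟨A, Finset.Subset.refl A, hle, fun j => rfl⟩
      · obtain ⟨Z, hZA, hZne, hZsum⟩ := hG V dV A φ hφ hsum (by omega)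
        have hsub : (A \ Z).card ≤ n := by
          have h1 : Z.card ≤ A.card := Finset.card_le_card hZA
          have h2 := Finset.card_sdiff_of_subset hZA
          have h3 : 0 < Z.card := Finset.card_pos.mpr hZne
          omega
        have hsums : ∀ j, ∑ x ∈ A \ Z, φ x j = ∑ x ∈ A, φ x j := by
          intro j
          rw [← Finset.sum_sdiff hZA (f := fun x => φ x j), hZsum j, add_zero]
        obtain ⟨X, hXsub, hXcard, hXsum⟩ := ih (A \ Z) φ hsub
          (fun x hx => hφ x (Finset.mem_sdiff.mp hx).1)
          (fun j => by rw [hsums j]; exact hsum j)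
        exact ⟨X, hXsub.trans Finset.sdiff_subset, hXcard,
          fun j => by rw [hXsum j, hsums j]⟩
  intro V dV A φ hb hsum
  set A₀ := A.filter (fun x => φ x ≠ 0) with hA₀
  have hsplit : ∀ j, ∑ x ∈ A₀, φ x j = ∑ x ∈ A, φ x j := by
    intro j
    rw [hA₀]
    rw [← Finset.sum_filter_add_sum_filter_not A (fun x => φ x ≠ 0) (fun x => φ x j)]
    have hz : ∀ x ∈ A.filter (fun x => ¬ φ x ≠ 0), φ x j = 0 := by
      intro x hx
      have h := (Finset.mem_filter.mp hx).2
      push_neg at h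
      simp [h]
    rw [Finset.sum_congr rfl hz]
    simp
  obtain ⟨X, hXsub, hXcard, hXsum⟩ := inner V dV A₀.card A₀ φ le_rfl
    (fun x hx => ⟨fun j => hb x (Finset.mem_of_mem_filter x hx) j, (Finset.mem_filter.mp hx).2⟩)
    (fun j => by rw [hsplit j]; exact hsum j)
  exact ⟨X, hXsub.trans (Finset.filter_subset _ _), hXcard,
    fun j => by rw [hXsum j, hsplit j]⟩

theorem my_ramsey_aux (s : ℕ) : ∀ (c : ℕ) (ks : Fin c → ℕ), (∑ i, ks i) ≤ s →
    ∃ N : ℕ, 0 < N ∧ ∀ (V : Type) (_ : DecidableEq V) (W : Finset V) (f : V → V → Fin c),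
      (∀ u v, f u v = f v u) → N ≤ W.card →
      ∃ (S : Finset V) (i : Fin c), S ⊆ W ∧ ks i ≤ S.card ∧
        ∀ u ∈ S, ∀ v ∈ S, u ≠ v → f u v = i := by
  induction s with
  | zero =>
    intro c ks hs
    rcases Nat.eq_zero_or_pos c with hc | hc
    · subst hc
      refine ⟨1, one_pos, fun V _ W f _ hW => ?_⟩
      obtain ⟨v, hv⟩ := Finset.card_pos.mp (lt_of_lt_of_le one_pos hW)
      exact (f v v).elim0
    · have hi : ks ⟨0, hc⟩ = 0 := by
        have := Finset.sum_le_sum_of_subset (f := ks) (Finset.subset_univ {(⟨0, hc⟩ : Fin c)})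
        simp only [Finset.sum_singleton] at this
        omega
      exact ⟨1, one_pos, fun V _ W f _ _ => ⟨∅, ⟨0, hc⟩, by simp [hi]⟩⟩
  | succ s ih =>
    intro c ks hs
    rcases Nat.eq_zero_or_pos c with hc | hc
    · subst hc
      refine ⟨1, one_pos, fun V _ W f _ hW => ?_⟩
      obtain ⟨v, hv⟩ := Finset.card_pos.mp (lt_of_lt_of_le one_pos hW)
      exact (f v v).elim0
    by_cases h0 : ∃ i, ks i = 0
    · obtain ⟨i, hi⟩ := h0
      exact ⟨1, one_pos, fun V _ W f _ _ => ⟨∅, i, by simp [hi]⟩⟩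
    push_neg at h0
    have hN : ∀ i : Fin c, ∃ N : ℕ, 0 < N ∧
        ∀ (V : Type) (_ : DecidableEq V) (W : Finset V) (f : V → V → Fin c),
        (∀ u v, f u v = f v u) → N ≤ W.card →
        ∃ (S : Finset V) (j : Fin c), S ⊆ W ∧ Function.update ks i (ks i - 1) j ≤ S.card ∧
          ∀ u ∈ S, ∀ v ∈ S, u ≠ v → f u v = j := by
      intro i
      apply ih
      have h2 : ∑ j, Function.update ks i (ks i - 1) j
          = (ks i - 1) + ∑ j ∈ Finset.univ.erase i, ks j := by
        rw [Finset.sum_update_of_mem (Finset.mem_univ i), Finset.sdiff_singleton_eq_erase]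
      have h3 : ∑ j, ks j = ks i + ∑ j ∈ Finset.univ.erase i, ks j :=
        (Finset.add_sum_erase _ ks (Finset.mem_univ i)).symm
      have := h0 i
      omega
    choose N hNpos hNspec using hN
    refine ⟨(∑ i, N i) + 2, by positivity, fun V dV W f hsym hW => ?_⟩
    obtain ⟨v, hv⟩ := Finset.card_pos.mp (by omega : 0 < W.card)
    have hcardWv : (∑ i, N i) + 1 ≤ (W.erase v).card := by
      have h1 := Finset.card_erase_of_mem hv
      omega
    have hdis : ∀ i ∈ (Finset.univ : Finset (Fin c)), ∀ j ∈ Finset.univ, i ≠ j →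
        Disjoint ((W.erase v).filter (fun u => f v u = i))
          ((W.erase v).filter (fun u => f v u = j)) := by
      intro i _ j _ hij
      exact Finset.disjoint_filter.mpr (fun x _ h1 h2 => hij (by rw [← h1, ← h2]))
    have hpig : ∃ i : Fin c, N i ≤ (((W.erase v).filter (fun u => f v u = i)).card) := by
      by_contra hcon
      push_neg at hcon
      have hsum : (W.erase v).card = ∑ i, ((W.erase v).filter (fun u => f v u = i)).card := by
        rw [← Finset.card_biUnion hdis]
        congr 1
        ext x
        simp only [Finset.mem_biUnion, Finset.mem_univ, true_and, Finset.mem_filter]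
        exact ⟨fun hx => ⟨f v x, hx, rfl⟩, fun ⟨i, hx, _⟩ => hx⟩
      have h4 : ∑ i, ((W.erase v).filter (fun u => f v u = i)).card ≤ ∑ i, (N i - 1) := by
        apply Finset.sum_le_sum
        intro i _
        have := hcon i
        omega
      have h5 : ∑ i, (N i - 1) + ∑ _i : Fin c, (1:ℕ) = ∑ i, N i := by
        rw [← Finset.sum_add_distrib]
        apply Finset.sum_congr rfl
        intro i _
        have := hNpos i
        omega
      have h6 : (0:ℕ) ≤ ∑ _i : Fin c, (1:ℕ) := Nat.zero_le _
      omega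
    obtain ⟨i, hi⟩ := hpig
    obtain ⟨S', j, hS'sub, hS'card, hS'mono⟩ :=
      hNspec i V dV ((W.erase v).filter (fun u => f v u = i)) f hsym hi
    have hS'W : S' ⊆ W := hS'sub.trans ((Finset.filter_subset _ _).trans (Finset.erase_subset _ _))
    by_cases hji : j = i
    · subst hji
      have hvS' : v ∉ S' := fun hmem => by
        have h7 := (Finset.mem_filter.mp (hS'sub hmem)).1
        exact (Finset.notMem_erase v W) h7
      refine ⟨insert v S', j, ?_, ?_, ?_⟩
      · exact Finset.insert_subset hv hS'W
      · rw [Finset.card_insert_of_notMem hvS']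
        rw [Function.update_self] at hS'card
        have := h0 j
        omega
      · intro a ha b hb hab
        rcases Finset.mem_insert.mp ha with rfl | ha' <;>
          rcases Finset.mem_insert.mp hb with rfl | hb'
        · exact absurd rfl hab
        · exact (Finset.mem_filter.mp (hS'sub hb')).2
        · rw [hsym]; exact (Finset.mem_filter.mp (hS'sub ha')).2
        · exact hS'mono a ha' b hb' hab
    · refine ⟨S', j, hS'W, ?_, hS'mono⟩
      rwa [Function.update_of_ne hji] at hS'card

theorem my_ramsey (c k : ℕ) :
    ∃ N : ℕ, 0 < N ∧ ∀ (V : Type) (_ : DecidableEq V) (W : Finset V) (f : V → V → Fin c),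
      (∀ u v, f u v = f v u) → N ≤ W.card →
      ∃ (S : Finset V) (i : Fin c), S ⊆ W ∧ k ≤ S.card ∧
        ∀ u ∈ S, ∀ v ∈ S, u ≠ v → f u v = i :=
  my_ramsey_aux (∑ _i : Fin c, k) c (fun _ => k) le_rfl
theorem stmt_14 (k r : ℕ) (hk : 0 < k) (hr : 0 < r) :
    ∃ C : ℕ, ∀ n : ℕ, ∀ w : Fin n → Fin n → ℕ,
      (∀ u v, w u v = w v u) → (∀ u v, w u v ≤ r) →
      ∃ S : Finset (Fin n), n - C ≤ S.card ∧
        ∃ T ⊆ S, min k (n - C) ≤ T.card ∧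
          ∀ u ∈ T, ∀ v ∈ T,
            (∑ a ∈ S.erase u, w u a) = ∑ a ∈ S.erase v, w v a := by
  obtain ⟨k', rfl⟩ : ∃ k', k = k' + 1 := ⟨k - 1, by omega⟩
  obtain ⟨K, hKpos, hK⟩ := my_ramsey (r+1) (k'+1)
  set B : ℕ := 2*r*K with hBdef
  have hB : 0 < B := by positivity
  obtain ⟨G, hGspec⟩ := lemE k' r B hr
  refine ⟨G + 2*K + 2, ?_⟩
  intro n w hsymm hwle
  by_cases hn : n ≤ G + 2*K + 2
  · refine ⟨∅, by omega, ∅, Finset.Subset.refl _, ?_, by simp⟩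
    have : n - (G + 2*K + 2) = 0 := by omega
    simp [this]
  · push_neg at hn
    set D : Fin n → ℕ := fun v => ∑ a ∈ Finset.univ.erase v, w v a with hD
    have hDle : ∀ v, D v ≤ (n-1) * r := by
      intro v
      have h1 := Finset.sum_le_card_nsmul (Finset.univ.erase v) (w v) r
        (fun a _ => hwle v a)
      rw [smul_eq_mul] at h1
      have h2 : (Finset.univ.erase v).card = n - 1 := by
        rw [Finset.card_erase_of_mem (Finset.mem_univ v), Finset.card_univ, Fintype.card_fin]
      rw [h2] at h1
      exact h1
    set M : ℕ := (n-1)/(2*K) + 1 with hM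
    have hmaps : ∀ v ∈ (Finset.univ : Finset (Fin n)), D v / B ∈ Finset.range M := by
      intro v _
      rw [Finset.mem_range, hM]
      have h1 : D v / B ≤ ((n-1)*r) / B := Nat.div_le_div_right (hDle v)
      have h2 : ((n-1)*r) / B = (n-1)/(2*K) := by
        rw [hBdef]
        rw [show (n-1)*r = r*(n-1) by ring, show 2*r*K = r*(2*K) by ring]
        exact Nat.mul_div_mul_left _ _ hr
      omega
    have hlt : (Finset.range M).card * (K-1) < (Finset.univ : Finset (Fin n)).card := by
      rw [Finset.card_range, Finset.card_univ, Fintype.card_fin]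
      set x := (n-1)/(2*K) with hx
      have h1 : x * (2*K) ≤ n-1 := Nat.div_mul_le_self _ _
      have h2 : M * (K-1) ≤ M * K := Nat.mul_le_mul_left M (by omega)
      have h3 : M * K = x * K + K := by rw [hM]; ring
      have h4 : x * (2*K) = 2 * (x*K) := by ring
      omega
    obtain ⟨val, _, hvalcard⟩ :=
      Finset.exists_lt_card_fiber_of_mul_lt_card_of_maps_to hmaps hlt
    set W : Finset (Fin n) := Finset.univ.filter (fun v => D v / B = val) with hW
    have hWgap : ∀ a ∈ W, ∀ b ∈ W, |(D a : ℤ) - D b| ≤ (B:ℤ) := by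
      intro a ha b hb
      have ha' : D a / B = val := (Finset.mem_filter.mp ha).2
      have hb' : D b / B = val := (Finset.mem_filter.mp hb).2
      have h1 := Nat.div_add_mod (D a) B
      have h2 := Nat.div_add_mod (D b) B
      have h3 : D a % B < B := Nat.mod_lt _ hB
      have h4 : D b % B < B := Nat.mod_lt _ hB
      rw [ha'] at h1
      rw [hb'] at h2
      rw [abs_le]
      constructor <;> omega
    -- Ramsey on W
    have hcol : ∀ u v : Fin n, (⟨w u v, by have := hwle u v; omega⟩ : Fin (r+1))
        = ⟨w v u, by have := hwle v u; omega⟩ := by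
      intro u v
      simp only [Fin.mk.injEq]
      exact hsymm u v
    obtain ⟨S₀, i, hS₀W, hS₀card, hS₀mono⟩ := hK (Fin n) inferInstance W
      (fun u v => ⟨w u v, by have := hwle u v; omega⟩) hcol (by omega)
    obtain ⟨U, hUS₀, hUcard⟩ := Finset.exists_subset_card_eq hS₀card
    have hUW : U ⊆ W := hUS₀.trans hS₀W
    set cc : ℕ := (i : ℕ) with hcc
    have hUmono : ∀ u ∈ U, ∀ v ∈ U, u ≠ v → w u v = cc := by
      intro u hu v hv huv
      have := hS₀mono u (hUS₀ hu) v (hUS₀ hv) huv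
      exact congrArg Fin.val this
    set e := U.orderIsoOfFin hUcard with he
    set u : Fin (k'+1) → Fin n := fun i => (e i : Fin n) with hu
    have humem : ∀ i, u i ∈ U := fun i => (e i).2
    -- degree identity
    have hdeg : ∀ i : Fin (k'+1), ∑ x ∈ Finset.univ \ U, (w (u i) x : ℤ)
        = (D (u i) : ℤ) - (cc : ℤ) * k' := by
      intro i
      have hsplitU : Finset.univ.erase (u i) = (Finset.univ \ U) ∪ U.erase (u i) := by
        ext a
        simp only [Finset.mem_erase, Finset.mem_univ, and_true, true_and, Finset.mem_sdiff,
          Finset.mem_union]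
        constructor
        · intro ha
          by_cases haU : a ∈ U
          · exact Or.inr ⟨ha, haU⟩
          · exact Or.inl haU
        · rintro (h | h)
          · intro heq
            rw [heq] at h
            exact h (humem i)
          · exact h.1
      have hdisjU : Disjoint (Finset.univ \ U) (U.erase (u i)) :=
        Finset.disjoint_of_subset_right (Finset.erase_subset _ _) Finset.sdiff_disjoint
      have hcast : (D (u i) : ℤ) = ∑ a ∈ Finset.univ.erase (u i), (w (u i) a : ℤ) := by
        rw [hD]
        push_cast
        rfl
      rw [hcast, hsplitU, Finset.sum_union hdisjU]
      have hconst : ∀ a ∈ U.erase (u i), (w (u i) a : ℤ) = (cc : ℤ) := by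
        intro a ha
        have h1 := Finset.mem_erase.mp ha
        have := hUmono (u i) (humem i) a h1.2 (fun hh => h1.1 hh.symm)
        exact_mod_cast congrArg (Nat.cast : ℕ → ℤ) this
      rw [Finset.sum_congr rfl hconst, Finset.sum_const, Finset.card_erase_of_mem (humem i),
        hUcard]
      simp only [nsmul_eq_mul]
      push_cast
      ring
    set φ : Fin n → Fin k' → ℤ := fun x j => (w (u j.succ) x : ℤ) - (w (u 0) x : ℤ) with hφ
    have htot : ∀ j : Fin k', ∑ x ∈ Finset.univ \ U, φ x j
        = (D (u j.succ) : ℤ) - D (u 0) := by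
      intro j
      rw [hφ]
      rw [Finset.sum_sub_distrib]
      rw [hdeg j.succ, hdeg 0]
      ring
    have hφbound : ∀ x ∈ Finset.univ \ U, ∀ j, |φ x j| ≤ (r:ℤ) := by
      intro x _ j
      have h1 := hwle (u j.succ) x
      have h2 := hwle (u 0) x
      simp only [hφ]
      rw [abs_le]
      omega
    have hφtot : ∀ j, |∑ x ∈ Finset.univ \ U, φ x j| ≤ (B:ℤ) := by
      intro j
      rw [htot j]
      exact hWgap (u j.succ) (hUW (humem j.succ)) (u 0) (hUW (humem 0))
    obtain ⟨X, hXsub, hXcard, hXsum⟩ := hGspec (Fin n) inferInstance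
      (Finset.univ \ U) φ hφbound hφtot
    refine ⟨Finset.univ \ X, ?_, U, ?_, ?_, ?_⟩
    · rw [Finset.card_sdiff_of_subset (Finset.subset_univ X), Finset.card_univ, Fintype.card_fin]
      omega
    · intro a ha
      rw [Finset.mem_sdiff]
      refine ⟨Finset.mem_univ a, fun hmem => ?_⟩
      have := Finset.mem_sdiff.mp (hXsub hmem)
      exact this.2 ha
    · calc min (k'+1) (n - (G + 2*K + 2)) ≤ k'+1 := min_le_left _ _
        _ = U.card := hUcard.symm
    · -- the degree equality
      have key : ∀ a ∈ U, ((∑ x ∈ (Finset.univ \ X).erase a, w a x : ℕ) : ℤ)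
          = (D a : ℤ) - ∑ x ∈ X, (w a x : ℤ) := by
        intro a ha
        have hXe : X ⊆ Finset.univ.erase a := by
          intro x hx
          rw [Finset.mem_erase]
          exact ⟨fun heq => (Finset.mem_sdiff.mp (hXsub hx)).2 (heq ▸ ha), Finset.mem_univ x⟩
        have hset : (Finset.univ \ X).erase a = (Finset.univ.erase a) \ X := by
          ext b
          simp only [Finset.mem_erase, Finset.mem_sdiff, Finset.mem_univ, true_and, and_true]
          try tauto
        have hDa : (D a : ℤ) = ∑ x ∈ Finset.univ.erase a, (w a x : ℤ) := by
          rw [hD]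
          push_cast
          try rfl
        rw [hset, hDa]
        have hsd := Finset.sum_sdiff (f := fun x => (w a x : ℤ)) hXe
        push_cast
        linarith [hsd]
      have hF : ∀ c, ∀ hc : c ∈ U, (D c : ℤ) - ∑ x ∈ X, (w c x : ℤ)
          = (D (u 0) : ℤ) - ∑ x ∈ X, (w (u 0) x : ℤ) := by
        intro c hc
        have hce : u (e.symm ⟨c, hc⟩) = c := by
          simp only [hu, OrderIso.apply_symm_apply]
        rcases Fin.eq_zero_or_eq_succ (e.symm ⟨c, hc⟩) with h0 | ⟨j, hjs⟩
        · rw [← hce, h0]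
        · rw [← hce, hjs]
          have hs := hXsum j
          rw [htot j] at hs
          have hsplit2 : ∑ x ∈ X, φ x j
              = ∑ x ∈ X, (w (u j.succ) x : ℤ) - ∑ x ∈ X, (w (u 0) x : ℤ) := by
            simp only [hφ]
            rw [Finset.sum_sub_distrib]
          rw [hsplit2] at hs
          linarith [hs]
      intro a ha b hb
      have h1 := key a ha
      have h2 := key b hb
      have hZ : ((∑ x ∈ (Finset.univ \ X).erase a, w a x : ℕ) : ℤ)
          = ((∑ x ∈ (Finset.univ \ X).erase b, w b x : ℕ) : ℤ) := by
        rw [h1, h2, hF a ha, hF b hb]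
      exact_mod_cast hZ
end

section
/- For every sufficiently large k there are infinitely many graphs G such that for every set X of fewer than (k·ln k)/10 vertices, the graph G − X does not contain k vertices of the same degree. Hence C(k) = Ω(k log k). -/
open Finset

/-- sum of powers of two -/
lemma aux_sum_pow_two (n : ℕ) : ∑ t ∈ Finset.range n, 2^t = 2^n - 1 := by
  induction n with
  | zero => simp
  | succ n ih =>
      rw [Finset.sum_range_succ, ih]
      have h1 : 1 ≤ 2^n := Nat.one_le_two_pow
      have h2 : 2^(n+1) = 2^n * 2 := pow_succ 2 n
      omega

/-- cardinality of a val-interval inside Fin n -/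
lemma aux_card_Ico (n a t : ℕ) (h : a + t ≤ n) :
    (Finset.univ.filter (fun v : Fin n => a ≤ v.val ∧ v.val < a + t)).card = t := by
  classical
  have himg : (Finset.univ.filter (fun v : Fin n => a ≤ v.val ∧ v.val < a + t)).image
      (fun v : Fin n => v.val) = Finset.Ico a (a+t) := by
    ext x
    simp only [Finset.mem_image, Finset.mem_filter, Finset.mem_univ, true_and, Finset.mem_Ico]
    constructor
    · rintro ⟨v, ⟨h1, h2⟩, rfl⟩; exact ⟨h1, h2⟩
    · rintro ⟨h1, h2⟩
      exact ⟨⟨x, lt_of_lt_of_le h2 h⟩, ⟨h1, h2⟩, rfl⟩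
  have hinj : Set.InjOn (fun v : Fin n => v.val)
      ((Finset.univ.filter (fun v : Fin n => a ≤ v.val ∧ v.val < a + t)) : Set (Fin n)) := by
    intro x _ y _ hxy; exact Fin.ext hxy
  rw [← Finset.card_image_of_injOn hinj, himg, Nat.card_Ico]
  omega

/-- division decode -/
lemma aux_div_mod (q i t : ℕ) (hq : 0 < q) (ht : t < q) :
    (i * q + t) / q = i ∧ (i * q + t) % q = t := by
  rw [add_comm]
  constructor
  · rw [Nat.add_mul_div_right _ _ hq, Nat.div_eq_of_lt ht]; omega
  · rw [Nat.add_mul_mod_self_right, Nat.mod_eq_of_lt ht]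
def vk (b q v : ℕ) : ℕ × ℕ × ℕ :=
  (v / q, v % q / 2 ^ b, v % q % 2 ^ b / 2 ^ (v % q / 2 ^ b))

/-- ranges of the components -/
lemma vk_range (b q m v : ℕ) (hq : q = (b+1) * 2^b) (hv : v < m * q) :
    (vk b q v).1 < m ∧ (vk b q v).2.1 ≤ b ∧
      (vk b q v).2.2 < 2 ^ (b - (vk b q v).2.1) := by
  have h2b : 0 < 2^b := by positivity
  have hq0 : 0 < q := by rw [hq]; positivity
  have hq2 : q = 2^b * (b+1) := by rw [hq]; ring
  have h1 : v / q < m := Nat.div_lt_of_lt_mul (by rw [mul_comm] at hv; exact hv)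
  have hmod : v % q < q := Nat.mod_lt _ hq0
  have h2 : v % q / 2^b ≤ b := by
    have : v % q / 2^b < b + 1 := Nat.div_lt_of_lt_mul (by rw [← hq2]; exact hmod)
    omega
  simp only [vk]
  refine ⟨h1, h2, ?_⟩
  have hm2 : v % q % 2^b < 2^b := Nat.mod_lt _ h2b
  have hsplit : 2 ^ (v % q / 2^b) * 2 ^ (b - v % q / 2^b) = 2^b := by
    rw [← pow_add]; congr 1; omega
  exact Nat.div_lt_of_lt_mul (by rw [hsplit]; exact hm2)

/-- decode: vk v = (i,j,c) iff v lies in an explicit interval -/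
lemma vk_eq_iff (b q m v i j c : ℕ) (hq : q = (b+1) * 2^b) (hv : v < m * q)
    (hj : j ≤ b) (hc : c < 2 ^ (b - j)) :
    vk b q v = (i, j, c) ↔
      i*q + j*2^b + c*2^j ≤ v ∧ v < i*q + j*2^b + c*2^j + 2^j := by
  have h2b : 0 < 2^b := by positivity
  have h2j : 0 < 2^j := by positivity
  have hq0 : 0 < q := by rw [hq]; positivity
  have hql : q = b*2^b + 2^b := by rw [hq]; ring
  have hcr : c * 2^j + 2^j ≤ 2^b := by
    have h1 : (c+1) * 2^j ≤ 2^(b-j) * 2^j := Nat.mul_le_mul_right _ (by omega)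
    rw [← pow_add] at h1
    have hbj : b - j + j = b := by omega
    rw [hbj] at h1
    have h2 : (c+1) * 2^j = c * 2^j + 2^j := by ring
    omega
  constructor
  · intro h
    have h1 : v / q = i := by
      have := congrArg Prod.fst h; simpa [vk] using this
    have h2 : v % q / 2^b = j := by
      have := congrArg (fun p => p.2.1) h; simpa [vk] using this
    have h3 : v % q % 2^b / 2^j = c := by
      have h' := congrArg (fun p => p.2.2) h; simp only [vk] at h'
      rwa [h2] at h'
    have e1 : v = q * (v / q) + v % q := (Nat.div_add_mod v q).symm
    have e2 : v % q = 2^b * (v % q / 2^b) + v % q % 2^b := (Nat.div_add_mod _ _).symm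
    have e3 : v % q % 2^b = 2^j * (v % q % 2^b / 2^j) + v % q % 2^b % 2^j :=
      (Nat.div_add_mod _ _).symm
    have hrlt : v % q % 2^b % 2^j < 2^j := Nat.mod_lt _ h2j
    have hveq : v = i*q + j*2^b + c*2^j + v % q % 2^b % 2^j := by
      conv_lhs => rw [e1, h1, e2, h2, e3, h3]
      ring
    omega
  · rintro ⟨hle, hlt⟩
    set r := v - (i*q + j*2^b + c*2^j) with hr
    have hrlt : r < 2 ^ j := by omega
    have hveq : v = i * q + (j*2^b + (c*2^j + r)) := by omega
    have hlt3 : c*2^j + r < 2^b := by omega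
    have hlt2 : j*2^b + (c*2^j + r) < q := by
      have h1 : j * 2^b ≤ b * 2^b := Nat.mul_le_mul_right _ hj
      omega
    have d1 := aux_div_mod q i (j*2^b + (c*2^j + r)) hq0 hlt2
    have d2 := aux_div_mod (2^b) j (c*2^j + r) h2b hlt3
    have d3 := aux_div_mod (2^j) c r h2j hrlt
    have e1 : v / q = i := by rw [hveq]; exact d1.1
    have e2 : v % q = j*2^b + (c*2^j + r) := by rw [hveq]; exact d1.2
    have e3 : v % q / 2^b = j := by rw [e2]; exact d2.1
    have e4 : v % q % 2^b = c*2^j + r := by rw [e2]; exact d2.2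
    simp only [vk]
    rw [e1, e3, e4, d3.1]
open scoped Classical in
/-- cardinality of a clique -/
lemma clq_card (b q m : ℕ) (hq : q = (b+1) * 2^b) (u : Fin (m*q)) :
    (Finset.univ.filter (fun w : Fin (m*q) => vk b q w.val = vk b q u.val)).card
      = 2 ^ ((vk b q u.val).2.1) := by
  obtain ⟨hi, hj, hc⟩ := vk_range b q m u.val hq u.isLt
  set i := (vk b q u.val).1 with hi'
  set j := (vk b q u.val).2.1 with hj'
  set c := (vk b q u.val).2.2 with hc'
  have hvk : vk b q u.val = (i, j, c) := rfl
  have hcr : c * 2^j + 2^j ≤ 2^b := by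
    have h1 : (c+1) * 2^j ≤ 2^(b-j) * 2^j := Nat.mul_le_mul_right _ (by omega)
    rw [← pow_add] at h1
    have hbj : b - j + j = b := by omega
    rw [hbj] at h1
    have h2 : (c+1) * 2^j = c * 2^j + 2^j := by ring
    omega
  have hbound : i*q + j*2^b + c*2^j + 2^j ≤ m * q := by
    have h1 : j * 2^b ≤ b * 2^b := Nat.mul_le_mul_right _ hj
    have h2 : i*q + q ≤ m*q := by
      have : i + 1 ≤ m := hi
      calc i*q + q = (i+1)*q := by ring
        _ ≤ m*q := Nat.mul_le_mul_right _ this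
    have hql : q = b*2^b + 2^b := by rw [hq]; ring
    omega
  have heq : (Finset.univ.filter (fun w : Fin (m*q) => vk b q w.val = vk b q u.val))
      = (Finset.univ.filter (fun w : Fin (m*q) =>
          i*q + j*2^b + c*2^j ≤ w.val ∧ w.val < i*q + j*2^b + c*2^j + 2^j)) := by
    apply Finset.filter_congr
    intro w _
    rw [hvk]
    exact vk_eq_iff b q m w.val i j c hq w.isLt hj hc
  rw [heq, aux_card_Ico _ _ _ hbound]

open scoped Classical in
/-- cardinality of a class -/
lemma cls_card (b q m i : ℕ) (hq : q = (b+1) * 2^b) (hi : i < m) :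
    (Finset.univ.filter (fun w : Fin (m*q) => w.val / q = i)).card = q := by
  have hq0 : 0 < q := by rw [hq]; positivity
  have hbound : i*q + q ≤ m * q := by
    calc i*q + q = (i+1)*q := by ring
      _ ≤ m*q := Nat.mul_le_mul_right _ hi
  have heq : (Finset.univ.filter (fun w : Fin (m*q) => w.val / q = i))
      = (Finset.univ.filter (fun w : Fin (m*q) => i*q ≤ w.val ∧ w.val < i*q + q)) := by
    apply Finset.filter_congr
    intro w _
    constructor
    · intro h
      have e1 : w.val = q * (w.val / q) + w.val % q := (Nat.div_add_mod _ _).symm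
      have e2 : w.val % q < q := Nat.mod_lt _ hq0
      rw [h] at e1
      have e3 : q * i = i * q := mul_comm q i
      constructor <;> omega
    · rintro ⟨h1, h2⟩
      have hlt : w.val - i*q < q := by omega
      have hveq : w.val = i*q + (w.val - i*q) := by omega
      rw [hveq]
      exact (aux_div_mod q i _ hq0 hlt).1
  rw [heq, aux_card_Ico _ _ _ hbound]

open scoped Classical in
/-- cardinality of a union of classes given by a predicate on the class index -/
lemma extset_card (b q m : ℕ) (hq : q = (b+1) * 2^b) (P : ℕ → Prop) :
    (Finset.univ.filter (fun w : Fin (m*q) => P (w.val / q))).card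
      = q * ((Finset.range m).filter P).card := by
  have hq0 : 0 < q := by rw [hq]; positivity
  rw [Finset.card_eq_sum_card_fiberwise
    (f := fun w : Fin (m*q) => w.val / q)
    (t := (Finset.range m).filter P) ?ht]
  case ht =>
    intro w hw
    simp only [Finset.mem_coe, Finset.mem_filter, Finset.mem_univ, true_and] at hw
    simp only [Finset.mem_coe, Finset.mem_filter, Finset.mem_range]
    exact ⟨Nat.div_lt_of_lt_mul (Nat.lt_of_lt_of_le w.isLt (le_of_eq (mul_comm m q))), hw⟩
  have hfib : ∀ j ∈ (Finset.range m).filter P,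
      ((Finset.univ.filter (fun w : Fin (m*q) => P (w.val / q))).filter
        (fun w => w.val / q = j)).card = q := by
    intro j hj
    simp only [Finset.mem_filter, Finset.mem_range] at hj
    rw [show ((Finset.univ.filter (fun w : Fin (m*q) => P (w.val / q))).filter
        (fun w => w.val / q = j)) = Finset.univ.filter (fun w : Fin (m*q) => w.val / q = j) by
      rw [Finset.filter_filter]
      apply Finset.filter_congr
      intro w _
      constructor
      · rintro ⟨_, h⟩; exact h
      · intro h; exact ⟨h ▸ hj.2, h⟩]
    exact cls_card b q m j hq hj.1
  rw [Finset.sum_congr rfl hfib, Finset.sum_const, smul_eq_mul, mul_comm]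
def adjF (b q m : ℕ) (u w : Fin (m*q)) : Prop :=
  u ≠ w ∧ ((u.val / q ≠ w.val / q ∧ m ≤ u.val / q + w.val / q) ∨
    vk b q u.val = vk b q w.val)

lemma adjF_symm (b q m : ℕ) : Symmetric (adjF b q m) := by
  rintro u w ⟨h1, h2⟩
  refine ⟨h1.symm, ?_⟩
  rcases h2 with ⟨h3, h4⟩ | h5
  · exact Or.inl ⟨h3.symm, by omega⟩
  · exact Or.inr h5.symm

lemma adjF_irrefl (b q m : ℕ) : Irreflexive (adjF b q m) := by
  rintro u ⟨h1, _⟩; exact h1 rfl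

open scoped Classical in
noncomputable def Ecard (b q m : ℕ) (X : Finset (Fin (m*q))) (i : ℕ) : ℕ :=
  ((Finset.univ.filter (fun w : Fin (m*q) => w.val / q ≠ i ∧ m ≤ i + w.val / q)) \ X).card

open scoped Classical in
noncomputable def Scard (b q m : ℕ) (X : Finset (Fin (m*q))) (u : Fin (m*q)) : ℕ :=
  ((Finset.univ.filter (fun w : Fin (m*q) => vk b q w.val = vk b q u.val)) \ X).card

open scoped Classical in
noncomputable def dHcard (m i : ℕ) : ℕ :=
  ((Finset.range m).filter (fun j => j ≠ i ∧ m ≤ i + j)).card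

open scoped Classical in
lemma deg_decomp (b q m : ℕ) (X : Finset (Fin (m*q))) (u : Fin (m*q)) (hu : u ∉ X) :
    (Xᶜ.filter (fun a => adjF b q m u a)).card + 1
      = Ecard b q m X (u.val / q) + Scard b q m X u := by
  classical
  have hmem : u ∈ (Finset.univ.filter
      (fun w : Fin (m*q) => vk b q w.val = vk b q u.val)) \ X := by
    simp [Finset.mem_sdiff, Finset.mem_filter, hu]
  have hset : Xᶜ.filter (fun a => adjF b q m u a) =
      ((Finset.univ.filter (fun w : Fin (m*q) =>
          w.val / q ≠ u.val / q ∧ m ≤ u.val / q + w.val / q)) \ X)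
      ∪ (((Finset.univ.filter (fun w : Fin (m*q) =>
          vk b q w.val = vk b q u.val)) \ X).erase u) := by
    ext w
    simp only [Finset.mem_filter, Finset.mem_compl, Finset.mem_union, Finset.mem_sdiff,
      Finset.mem_erase, Finset.mem_univ, true_and]
    unfold adjF
    constructor
    · rintro ⟨hwx, hne, hor⟩
      rcases hor with ⟨h1, h2⟩ | he
      · exact Or.inl ⟨⟨h1.symm, h2⟩, hwx⟩
      · exact Or.inr ⟨fun h => hne h.symm, he.symm, hwx⟩
    · rintro (⟨⟨h1, h2⟩, hwx⟩ | ⟨hwu, he, hwx⟩)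
      · exact ⟨hwx, fun h => h1 (by rw [h]), Or.inl ⟨h1.symm, h2⟩⟩
      · exact ⟨hwx, fun h => hwu h.symm, Or.inr he.symm⟩
  have hdisj : Disjoint
      ((Finset.univ.filter (fun w : Fin (m*q) =>
          w.val / q ≠ u.val / q ∧ m ≤ u.val / q + w.val / q)) \ X)
      (((Finset.univ.filter (fun w : Fin (m*q) =>
          vk b q w.val = vk b q u.val)) \ X).erase u) := by
    rw [Finset.disjoint_left]
    intro w hw1 hw2
    simp only [Finset.mem_sdiff, Finset.mem_filter, Finset.mem_erase, Finset.mem_univ,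
      true_and] at hw1 hw2
    exact hw1.1.1 (congrArg Prod.fst hw2.2.1)
  rw [hset, Finset.card_union_of_disjoint hdisj, Finset.card_erase_of_mem hmem]
  have h1 : 1 ≤ Scard b q m X u := by
    rw [Scard]
    exact Finset.card_pos.2 ⟨u, hmem⟩
  rw [Ecard, Scard] at *
  omega

open scoped Classical in
lemma Scard_pos (b q m : ℕ) (X : Finset (Fin (m*q))) (u : Fin (m*q)) (hu : u ∉ X) :
    1 ≤ Scard b q m X u := by
  rw [Scard]
  exact Finset.card_pos.2 ⟨u, by simp [Finset.mem_sdiff, Finset.mem_filter, hu]⟩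

open scoped Classical in
lemma Scard_le (b q m : ℕ) (hq : q = (b+1) * 2^b) (X : Finset (Fin (m*q))) (u : Fin (m*q)) :
    Scard b q m X u ≤ 2 ^ ((vk b q u.val).2.1) := by
  rw [Scard, ← clq_card b q m hq u]
  exact Finset.card_le_card (Finset.sdiff_subset)

open scoped Classical in
lemma Ecard_ub (b q m : ℕ) (hq : q = (b+1) * 2^b) (X : Finset (Fin (m*q))) (i : ℕ) :
    Ecard b q m X i ≤ q * dHcard m i := by
  rw [Ecard, dHcard]
  refine le_trans (Finset.card_le_card Finset.sdiff_subset) (le_of_eq ?_)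
  convert extset_card b q m hq (fun j => j ≠ i ∧ m ≤ i + j) using 2
  all_goals first
    | exact Finset.filter_congr_decidable _ _ _
    | exact (Finset.filter_congr_decidable _ _ _).symm
    | exact congrArg Finset.card (Finset.filter_congr_decidable _ _ _)
    | exact congrArg Finset.card (Finset.filter_congr_decidable _ _ _).symm

open scoped Classical in
lemma Ecard_lb (b q m : ℕ) (hq : q = (b+1) * 2^b) (X : Finset (Fin (m*q))) (i : ℕ) :
    q * dHcard m i ≤ Ecard b q m X i + X.card := by
  rw [Ecard, dHcard]
  refine le_trans (le_of_eq ?_) Finset.card_le_card_sdiff_add_card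
  convert (extset_card b q m hq (fun j => j ≠ i ∧ m ≤ i + j)).symm using 2
  all_goals first
    | exact Finset.filter_congr_decidable _ _ _
    | exact (Finset.filter_congr_decidable _ _ _).symm
    | exact congrArg Finset.card (Finset.filter_congr_decidable _ _ _)
    | exact congrArg Finset.card (Finset.filter_congr_decidable _ _ _).symm

open scoped Classical in
lemma dH_formula (m i : ℕ) (hi : i < m) :
    dHcard m i = if m ≤ 2*i then i - 1 else i := by
  rw [dHcard]
  by_cases h : m ≤ 2*i
  · rw [if_pos h]
    rw [show (Finset.range m).filter (fun j => j ≠ i ∧ m ≤ i + j)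
        = (Finset.Ico (m-i) m).erase i from by
      ext j
      simp only [Finset.mem_filter, Finset.mem_range, Finset.mem_erase, Finset.mem_Ico]
      omega]
    rw [Finset.card_erase_of_mem (by simp only [Finset.mem_Ico]; omega), Nat.card_Ico]
    omega
  · rw [if_neg h]
    rw [show (Finset.range m).filter (fun j => j ≠ i ∧ m ≤ i + j)
        = Finset.Ico (m-i) m from by
      ext j
      simp only [Finset.mem_filter, Finset.mem_range, Finset.mem_Ico]
      omega]
    rw [Nat.card_Ico]
    omega
open scoped Classical in
lemma class_bound (b q m : ℕ) (hq : q = (b+1) * 2^b) (X T : Finset (Fin (m*q)))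
    (hTX : ∀ v ∈ T, v ∉ X)
    (hdeg : ∀ u ∈ T, ∀ v ∈ T, (Xᶜ.filter (fun a => adjF b q m u a)).card
        = (Xᶜ.filter (fun a => adjF b q m v a)).card) (i : ℕ) :
    (T.filter (fun u => u.val / q = i)).card ≤ 2^(b+1) - 1 := by
  classical
  set Si := T.filter (fun u => u.val / q = i) with hSi
  rcases Si.eq_empty_or_nonempty with he | ⟨u1, hu1⟩
  · rw [he]; simp
  have hu1' : u1 ∈ T ∧ u1.val / q = i := by
    simpa [hSi, Finset.mem_filter] using hu1
  set s := Scard b q m X u1 with hs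
  have hs1 : 1 ≤ s := Scard_pos b q m X u1 (hTX u1 hu1'.1)
  -- all members of Si have the same remaining clique size s
  have hscommon : ∀ u ∈ Si, Scard b q m X u = s := by
    intro u hu
    have hu' : u ∈ T ∧ u.val / q = i := by simpa [hSi, Finset.mem_filter] using hu
    have h1 := deg_decomp b q m X u (hTX u hu'.1)
    have h2 := deg_decomp b q m X u1 (hTX u1 hu1'.1)
    have h3 := hdeg u hu'.1 u1 hu1'.1
    rw [hu'.2] at h1
    rw [hu1'.2] at h2
    omega
  have hsle : ∀ u ∈ Si, s ≤ 2 ^ ((vk b q u.val).2.1) := by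
    intro u hu
    rw [← hscommon u hu]
    exact Scard_le b q m hq X u
  set j0 := Nat.clog 2 s with hj0
  have hj0le : ∀ u ∈ Si, j0 ≤ (vk b q u.val).2.1 := by
    intro u hu
    exact (Nat.clog_le_iff_le_pow one_lt_two).2 (hsle u hu)
  have hblk1 : (vk b q u1.val).2.1 ≤ b := (vk_range b q m u1.val hq u1.isLt).2.1
  have hj0b : j0 ≤ b := by
    refine (Nat.clog_le_iff_le_pow one_lt_two).2 (le_trans (hsle u1 hu1) ?_)
    exact Nat.pow_le_pow_right (by norm_num) hblk1
  have hsj0 : s ≤ 2 ^ j0 := Nat.le_pow_clog one_lt_two s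
  set f : Fin (m*q) → ℕ × ℕ := fun u => ((vk b q u.val).2.1, (vk b q u.val).2.2) with hf
  set B := (Finset.Ico j0 (b+1)).biUnion
      (fun j => {j} ×ˢ Finset.range (2^(b-j))) with hB
  have himg : Si.image f ⊆ B := by
    intro a ha
    obtain ⟨u, hu, rfl⟩ := Finset.mem_image.1 ha
    have hr := vk_range b q m u.val hq u.isLt
    simp only [hB, Finset.mem_biUnion, Finset.mem_Ico, Finset.mem_product,
      Finset.mem_singleton, Finset.mem_range]
    exact ⟨(vk b q u.val).2.1, ⟨hj0le u hu, by have := hr.2.1; omega⟩, rfl, hr.2.2⟩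
  have hBcard : B.card = 2^(b+1-j0) - 1 := by
    rw [hB, Finset.card_biUnion]
    · have h1 : ∀ j ∈ Finset.Ico j0 (b+1),
          ({j} ×ˢ Finset.range (2^(b-j))).card = 2^(b-j) := by
        intro j _
        rw [Finset.card_product]
        simp
      rw [Finset.sum_congr rfl h1, Finset.sum_Ico_eq_sum_range]
      have h2 : ∀ t ∈ Finset.range (b+1-j0), 2^(b-(j0+t)) = 2^((b+1-j0) - 1 - t) := by
        intro t ht
        congr 1
        simp only [Finset.mem_range] at ht
        omega
      rw [Finset.sum_congr rfl h2, Finset.sum_range_reflect (fun t => 2^t) (b+1-j0),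
        aux_sum_pow_two]
    · intro x hx y hy hxy
      rw [Function.onFun, Finset.disjoint_left]
      intro a ha ha'
      simp only [Finset.mem_product, Finset.mem_singleton] at ha ha'
      exact hxy (ha.1 ▸ ha'.1)
  have hfib : ∀ a ∈ Si.image f, (Si.filter (fun u => f u = a)).card ≤ s := by
    intro a ha
    obtain ⟨u', hu', hfu⟩ := Finset.mem_image.1 ha
    have hsub : Si.filter (fun u => f u = a) ⊆
        (Finset.univ.filter (fun w : Fin (m*q) => vk b q w.val = vk b q u'.val)) \ X := by
      intro w hw
      have hw' : (w ∈ T ∧ w.val / q = i) ∧ f w = a := by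
        simpa [hSi, Finset.mem_filter] using hw
      have hu'' : u' ∈ T ∧ u'.val / q = i := by simpa [hSi, Finset.mem_filter] using hu'
      simp only [Finset.mem_sdiff, Finset.mem_filter, Finset.mem_univ, true_and]
      constructor
      · have hc1 : (vk b q w.val).1 = (vk b q u'.val).1 := by
          show w.val / q = u'.val / q
          rw [hw'.1.2, hu''.2]
        have hc2 : (vk b q w.val).2 = (vk b q u'.val).2 := by
          have e1 : f w = f u' := by rw [hw'.2, hfu]
          have e2 : ((vk b q w.val).2.1, (vk b q w.val).2.2)
              = ((vk b q u'.val).2.1, (vk b q u'.val).2.2) := e1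
          exact Prod.ext (congrArg Prod.fst e2) (congrArg Prod.snd e2)
        exact Prod.ext hc1 hc2
      · exact hTX w hw'.1.1
    calc (Si.filter (fun u => f u = a)).card
        ≤ ((Finset.univ.filter (fun w : Fin (m*q) =>
            vk b q w.val = vk b q u'.val)) \ X).card := Finset.card_le_card hsub
      _ = s := by
          have hu'' : u' ∈ T ∧ u'.val / q = i := by simpa [hSi, Finset.mem_filter] using hu'
          have := hscommon u' hu'
          rw [Scard] at this
          exact this
  have hpow : 2^j0 * 2^(b+1-j0) = 2^(b+1) := by
    rw [← pow_add]; congr 1; omega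
  calc Si.card ≤ s * (Si.image f).card := Finset.card_le_mul_card_image Si s hfib
    _ ≤ s * B.card := Nat.mul_le_mul_left s (Finset.card_le_card himg)
    _ = s * (2^(b+1-j0) - 1) := by rw [hBcard]
    _ ≤ 2^j0 * (2^(b+1-j0) - 1) := Nat.mul_le_mul_right _ hsj0
    _ = 2^(b+1) - 2^j0 := by rw [Nat.mul_sub, mul_one, hpow]
    _ ≤ 2^(b+1) - 1 := by
        have : 1 ≤ 2^j0 := Nat.one_le_two_pow
        omega
open scoped Classical in
lemma blow_aux (b m : ℕ) :
    ∃ G : SimpleGraph (Fin (m * ((b+1) * 2^b))),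
      ∀ X : Finset (Fin (m * ((b+1) * 2^b))), X.card < b * 2^b →
      ∀ T : Finset (Fin (m * ((b+1) * 2^b))), (∀ v ∈ T, v ∉ X) →
      (∀ u ∈ T, ∀ v ∈ T, (Xᶜ.filter (fun a => G.Adj u a)).card
          = (Xᶜ.filter (fun a => G.Adj v a)).card) →
      T.card ≤ 2^(b+2) - 2 := by
  classical
  set q := (b+1) * 2^b with hqdef
  have hq : q = (b+1) * 2^b := hqdef
  refine ⟨⟨adjF b q m, ⟨fun _ _ h => adjF_symm b q m h⟩, ⟨adjF_irrefl b q m⟩⟩, ?_⟩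
  intro X hX T hTX hdeg
  have hdeg' : ∀ u ∈ T, ∀ v ∈ T, (Xᶜ.filter (fun a => adjF b q m u a)).card
      = (Xᶜ.filter (fun a => adjF b q m v a)).card := hdeg
  rcases T.eq_empty_or_nonempty with rfl | ⟨u0, hu0⟩
  · simp
  have hm : 0 < m := by
    have h := u0.isLt
    rcases Nat.eq_zero_or_pos m with h0 | h0
    · exfalso
      have hmq : m * q = 0 := by rw [h0]; ring
      omega
    · exact h0
  have hql : q = b*2^b + 2^b := by rw [hq]; ring
  have hclslt : ∀ u : Fin (m*q), u.val / q < m := fun u =>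
    Nat.div_lt_of_lt_mul (Nat.lt_of_lt_of_le u.isLt (le_of_eq (mul_comm m q)))
  have hSub : ∀ u : Fin (m*q), Scard b q m X u ≤ 2^b := fun u =>
    le_trans (Scard_le b q m hq X u)
      (Nat.pow_le_pow_right (by norm_num) (vk_range b q m u.val hq u.isLt).2.1)
  -- Step A: all vertices of T lie in classes of equal half-graph degree
  have hD : ∀ u ∈ T, ∀ v ∈ T, dHcard m (u.val/q) = dHcard m (v.val/q) := by
    have key : ∀ u ∈ T, ∀ v ∈ T, ¬ (dHcard m (u.val/q) < dHcard m (v.val/q)) := by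
      intro u hu v hv hlt
      have h1 := deg_decomp b q m X u (hTX u hu)
      have h2 := deg_decomp b q m X v (hTX v hv)
      have h3 := hdeg' u hu v hv
      have e1 := Ecard_ub b q m hq X (u.val/q)
      have e2 := Ecard_lb b q m hq X (v.val/q)
      have e3 : q * (dHcard m (u.val/q) + 1) ≤ q * (dHcard m (v.val/q)) :=
        Nat.mul_le_mul_left _ (by omega)
      have e4 : q * (dHcard m (u.val/q) + 1) = q * dHcard m (u.val/q) + q := by ring
      have e5 := hSub u
      have e6 := Scard_pos b q m X v (hTX v hv)
      omega
    intro u hu v hv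
    have k1 := key u hu v hv
    have k2 := key v hv u hu
    omega
  -- Step B: at most two classes
  set D0 := dHcard m (u0.val / q) with hD0
  have hcls2 : ∀ u ∈ T, u.val / q = D0 ∨ u.val / q = D0 + 1 := by
    intro u hu
    have hfor := dH_formula m (u.val/q) (hclslt u)
    have heq : dHcard m (u.val/q) = D0 := hD u hu u0 hu0
    rw [hfor] at heq
    split_ifs at heq with hc
    · right; omega
    · left; omega
  have hsplit : T ⊆ T.filter (fun u => u.val / q = D0)
      ∪ T.filter (fun u => u.val / q = D0 + 1) := by
    intro u hu
    rcases hcls2 u hu with h | h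
    · exact Finset.mem_union_left _ (Finset.mem_filter.2 ⟨hu, h⟩)
    · exact Finset.mem_union_right _ (Finset.mem_filter.2 ⟨hu, h⟩)
  have hb1 := class_bound b q m hq X T hTX hdeg' D0
  have hb2 := class_bound b q m hq X T hTX hdeg' (D0+1)
  have hcard := le_trans (Finset.card_le_card hsplit) (Finset.card_union_le _ _)
  have hpow : 2^(b+2) = 2 * 2^(b+1) := by ring
  have hone : 1 ≤ 2^(b+1) := Nat.one_le_two_pow
  omega
open scoped Classical in
theorem stmt_18 :
    ∃ K₀ : ℕ, ∀ k : ℕ, K₀ ≤ k → ∀ N : ℕ,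
      ∃ (n : ℕ) (G : SimpleGraph (Fin n)), N ≤ n ∧
        ∀ X : Finset (Fin n), (X.card : ℝ) < k * Real.log k / 10 →
          ¬ ∃ T : Finset (Fin n), T.card = k ∧ (∀ v ∈ T, v ∉ X) ∧
            ∀ u ∈ T, ∀ v ∈ T,
              (Xᶜ.filter (fun a => G.Adj u a)).card =
                (Xᶜ.filter (fun a => G.Adj v a)).card := by
  classical
  refine ⟨1024, ?_⟩
  intro k hk N
  set L := Nat.log 2 k with hLdef
  set b := L - 2 with hbdef
  have h1024 : (2:ℕ)^10 ≤ k := le_trans (by norm_num) hk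
  have hL10 : 10 ≤ L := (Nat.le_log_iff_pow_le (b := 2) (y := k) (by norm_num) (by omega)).2 h1024
  have hb8 : 8 ≤ b := by omega
  have hLpow : 2^L ≤ k := Nat.pow_log_le_self 2 (by omega)
  have hLpow' : k < 2^(L+1) := Nat.lt_pow_succ_log_self (by norm_num) k
  have hkb : 2^(b+2) ≤ k := by rw [show b+2 = L from by omega]; exact hLpow
  have hkb' : k < 2^(b+3) := by rw [show b+3 = L+1 from by omega]; exact hLpow'
  obtain ⟨G, hG⟩ := blow_aux b (N+1)
  refine ⟨(N+1) * ((b+1) * 2^b), G, ?_, ?_⟩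
  · have hq1 : 1 ≤ (b+1) * 2^b := Nat.one_le_iff_ne_zero.2 (by positivity)
    calc N ≤ N + 1 := by omega
      _ = (N+1) * 1 := by ring
      _ ≤ (N+1) * ((b+1)*2^b) := Nat.mul_le_mul_left _ hq1
  · intro X hXr
    have hreal : (k : ℝ) * Real.log k / 10 ≤ ((b * 2^b : ℕ) : ℝ) := by
      have hk8 : (k:ℝ) ≤ 8 * 2^b := by
        have h : (k:ℝ) < ((2:ℝ))^(b+3) := by exact_mod_cast hkb'
        have he : ((2:ℝ))^(b+3) = 8 * 2^b := by rw [pow_add]; ring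
        linarith
      have hk1 : (1:ℝ) ≤ (k:ℝ) := by
        have : (1:ℕ) ≤ k := by omega
        exact_mod_cast this
      have hlogk : Real.log k ≤ (b+3) * Real.log 2 := by
        have h1 : (k:ℝ) ≤ (2:ℝ)^(b+3) := by exact_mod_cast le_of_lt hkb'
        calc Real.log k ≤ Real.log ((2:ℝ)^(b+3)) := by
              apply Real.log_le_log (by linarith) h1
          _ = (b+3) * Real.log 2 := by rw [Real.log_pow]; push_cast; ring
      have hlogpos : 0 ≤ Real.log k := Real.log_nonneg hk1
      have hln2 : Real.log 2 < 0.6931471808 := Real.log_two_lt_d9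
      have hln2' : 0 < Real.log 2 := Real.log_pos (by norm_num)
      have hbr : (8:ℝ) ≤ (b:ℝ) := by exact_mod_cast hb8
      have h2b : (0:ℝ) < 2^b := by positivity
      push_cast
      rw [div_le_iff₀ (by norm_num)]
      have hfac : 8*((b:ℝ)+3) * Real.log 2 ≤ 10 * b := by
        have hstep : 8*((b:ℝ)+3) * Real.log 2 ≤ 8*((b:ℝ)+3) * 0.6931471808 := by
          apply mul_le_mul_of_nonneg_left (le_of_lt hln2) (by linarith)
        linarith
      calc (k:ℝ) * Real.log k ≤ (8*2^b) * ((b+3) * Real.log 2) := by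
            apply mul_le_mul hk8 hlogk hlogpos (by positivity)
        _ = 2^b * (8*((b:ℝ)+3) * Real.log 2) := by ring
        _ ≤ 2^b * (10*b) := by
            apply mul_le_mul_of_nonneg_left hfac (le_of_lt h2b)
        _ = (b:ℝ) * 2^b * 10 := by ring
    have hXcard : X.card < b * 2^b := by
      have h := lt_of_lt_of_le hXr hreal
      exact_mod_cast h
    rintro ⟨T, hTc, hTX, hTdeg⟩
    have hbound := hG X hXcard T hTX hTdeg
    have h2 : (2:ℕ)^1 ≤ 2^(b+2) := Nat.pow_le_pow_right (by norm_num) (by omega)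
    simp only [pow_one] at h2
    omega
end
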